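/- arXiv:1803.08472 — 2 statements merged into one kernel-verified Lean document; each statement's English description precedes it below -/
import Mathlib

section
/- Let a = (a_1,…,a_{n+1}) ∈ ℤ^{n+1} with a_1 ≥ a_2 ≥ ⋯ ≥ a_{n+1}, and let λ ⊢ n+1 be a partition of n+1. Then quot_λ(Π(a)) = {(x_1,…,x_{ℓ(λ)}) ∈ ℝ^{ℓ(λ)} : x_1+⋯+x_{ℓ(λ)} = a_1+⋯+a_{n+1}, and Σ_{i∈I} x_i ≤ a_1+⋯+a_{λ(I)} for every subset I ⊆ [ℓ(λ)]}, where λ(I) := Σ_{i∈I} λ_i. In particular, quot_λ(Π(a)) is a generalized permutohedron in ℝ^{ℓ(λ)}. -/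
/-- The lattice `ℤ^n` inside `ℝ^n`. -/
def intLattice (n : ℕ) : Set (Fin n → ℝ) := {v | ∀ i, ∃ z : ℤ, v i = (z : ℝ)}

/-- The permutohedron `Π(a) ⊆ ℝ^{n+1}`: the convex hull of the coordinate
permutations of `a`. -/
noncomputable def permA {n : ℕ} (a : Fin (n + 1) → ℝ) : Set (Fin (n + 1) → ℝ) :=
  convexHull ℝ {x | ∃ σ : Equiv.Perm (Fin (n + 1)), x = fun i => a (σ i)}

/-- For a partition with parts `lam 0 ≥ lam 1 ≥ …` (of length `l`), the quotient map
`quot_λ : ℝ^{n+1} ↠ ℝ^{ℓ(λ)}` whose `j`-th coordinate is the sum of the entries over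
the `j`-th consecutive block of sizes `lam 0, …, lam (l-1)`. -/
noncomputable def quotPart {n : ℕ} (l : ℕ) (lam : Fin l → ℕ) (b : Fin (n + 1) → ℝ) :
    Fin l → ℝ :=
  fun j => ∑ i ∈ Finset.univ.filter (fun i : Fin (n + 1) =>
      (∑ j' ∈ Finset.univ.filter (fun j' : Fin l => j' < j), lam j') ≤ i.1 ∧
        i.1 < (∑ j' ∈ Finset.univ.filter (fun j' : Fin l => j' < j), lam j') + lam j),
    b i


open Finset

namespace TQFD

variable {n l : ℕ}

/-- Extension of `a` to `ℕ` (constant past the end). -/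
noncomputable def A (n : ℕ) (a : Fin (n+1) → ℤ) : ℕ → ℝ :=
  fun t => (a ⟨min t n, Nat.lt_succ_of_le (min_le_right _ _)⟩ : ℝ)

/-- `g k` = sum of first `k` entries of `a`. -/
noncomputable def g (n : ℕ) (a : Fin (n+1) → ℤ) : ℕ → ℝ :=
  fun k => ∑ t ∈ Finset.range k, A n a t

lemma A_antitone {a : Fin (n+1) → ℤ} (ha : ∀ s t : Fin (n+1), s ≤ t → a t ≤ a s) :
    Antitone (A n a) := by
  intro s t hst
  have : (⟨min s n, Nat.lt_succ_of_le (min_le_right _ _)⟩ : Fin (n+1)) ≤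
      ⟨min t n, Nat.lt_succ_of_le (min_le_right _ _)⟩ := by
    simp [Fin.le_def]; omega
  simp only [A]
  exact_mod_cast ha _ _ this

lemma a_eq_A {a : Fin (n+1) → ℤ} (i : Fin (n+1)) : (a i : ℝ) = A n a i.1 := by
  have : min i.1 n = i.1 := Nat.min_eq_left (Nat.lt_succ_iff.mp i.2)
  simp only [A]
  congr 1
  exact congrArg a (Fin.ext this.symm)

lemma g_submod {a : Fin (n+1) → ℤ} (ha : ∀ s t : Fin (n+1), s ≤ t → a t ≤ a s)
    {p q : ℕ} (r : ℕ) (hpq : p ≤ q) :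
    g n a (q + r) + g n a p ≤ g n a (p + r) + g n a q := by
  induction r with
  | zero => simp; linarith
  | succ r ih =>
    have h1 : g n a (q + (r+1)) = g n a (q + r) + A n a (q + r) := by
      simp [g, ← Nat.add_assoc, Finset.sum_range_succ]
    have h2 : g n a (p + (r+1)) = g n a (p + r) + A n a (p + r) := by
      simp [g, ← Nat.add_assoc, Finset.sum_range_succ]
    have h3 : A n a (q + r) ≤ A n a (p + r) := A_antitone ha (by omega)
    rw [h1, h2]; linarith

lemma le_apply_strictMono {k : ℕ} {f : Fin k → ℕ} (hf : StrictMono f) :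
    ∀ v (hv : v < k), v ≤ f ⟨v, hv⟩ := by
  intro v
  induction v with
  | zero => exact fun _ => Nat.zero_le _
  | succ p ih =>
    intro hv
    have hp : p < k := by omega
    have h1 : f ⟨p, hp⟩ < f ⟨p+1, hv⟩ := hf (by simp [Fin.lt_def])
    have h2 := ih hp
    omega

/-- The sum of `a` over any `k`-element subset is at most the sum of the `k` largest. -/
lemma sum_le_g {a : Fin (n+1) → ℤ} (ha : ∀ s t : Fin (n+1), s ≤ t → a t ≤ a s)
    (V : Finset (Fin (n+1))) : ∑ i ∈ V, (a i : ℝ) ≤ g n a V.card := by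
  set k := V.card with hk
  have hkn : k ≤ n + 1 := hk ▸ (Finset.card_le_card (Finset.subset_univ V)).trans
    (by simp)
  let e := V.orderEmbOfFin hk.symm
  have hsum : ∑ i ∈ V, (a i : ℝ) = ∑ m : Fin k, (a (e m) : ℝ) := by
    rw [← Finset.sum_attach V (fun i => (a i : ℝ))]
    exact (Fintype.sum_equiv (V.orderIsoOfFin hk.symm).toEquiv _ _ (fun m => rfl)).symm
  rw [hsum]
  have hterm : ∀ m : Fin k, (a (e m) : ℝ) ≤ A n a m.1 := by
    intro m
    have hsm : StrictMono (fun m : Fin k => (e m).1) := fun x y hxy => e.strictMono hxy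
    have hle : m.1 ≤ (e m).1 := by
      have := le_apply_strictMono hsm m.1 m.2
      simpa using this
    rw [a_eq_A (e m)]
    exact A_antitone ha hle
  calc ∑ m : Fin k, (a (e m) : ℝ) ≤ ∑ m : Fin k, A n a m.1 :=
        Finset.sum_le_sum (fun m _ => hterm m)
    _ = g n a k := by rw [g, Fin.sum_univ_eq_sum_range]

lemma Bf_eq_g {a : Fin (n+1) → ℤ} {k : ℕ} (hkn : k ≤ n + 1) :
    ∑ t ∈ Finset.univ.filter (fun t : Fin (n+1) => t.1 < k), (a t : ℝ) = g n a k := by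
  rw [show (∑ t ∈ Finset.univ.filter (fun t : Fin (n+1) => t.1 < k), (a t : ℝ))
      = ∑ t ∈ (Finset.univ.filter (fun t : Fin (n+1) => t.1 < k)).map Fin.valEmbedding,
        A n a t by rw [Finset.sum_map]; exact Finset.sum_congr rfl (fun i _ => a_eq_A i)]
  have : (Finset.univ.filter (fun t : Fin (n+1) => t.1 < k)).map Fin.valEmbedding
      = Finset.range k := by
    ext t
    simp only [Finset.mem_map, Finset.mem_filter, Finset.mem_univ, true_and,
      Fin.valEmbedding_apply, Finset.mem_range]
    constructor
    · rintro ⟨i, hi, rfl⟩; exact hi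
    · intro ht; exact ⟨⟨t, by omega⟩, ht, rfl⟩
  rw [this]; rfl


def lams (lam : Fin l → ℕ) (I : Finset (Fin l)) : ℕ := ∑ j ∈ I, lam j

def off (lam : Fin l → ℕ) (j : Fin l) : ℕ :=
  ∑ j' ∈ Finset.univ.filter (fun j' : Fin l => j' < j), lam j'

def block (n : ℕ) (lam : Fin l → ℕ) (j : Fin l) : Finset (Fin (n+1)) :=
  Finset.univ.filter (fun i : Fin (n+1) => off lam j ≤ i.1 ∧ i.1 < off lam j + lam j)

lemma quotPart_eq (lam : Fin l → ℕ) (b : Fin (n+1) → ℝ) (j : Fin l) :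
    quotPart l lam b j = ∑ i ∈ block n lam j, b i := rfl

lemma off_add_le (lam : Fin l → ℕ) (hsum : ∑ j, lam j = n + 1) (j : Fin l) :
    off lam j + lam j ≤ n + 1 := by
  have : off lam j + lam j = ∑ j' ∈ Finset.univ.filter (fun j' : Fin l => j' ≤ j), lam j' := by
    rw [off]
    have : Finset.univ.filter (fun j' : Fin l => j' ≤ j)
        = insert j (Finset.univ.filter (fun j' : Fin l => j' < j)) := by
      ext j'; simp [le_iff_lt_or_eq, or_comm, eq_comm]
    rw [this, Finset.sum_insert (by simp)]
    ring
  rw [this, ← hsum]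
  exact Finset.sum_le_sum_of_subset (Finset.subset_univ _)

lemma off_mono_strict (lam : Fin l → ℕ) {j j' : Fin l} (h : j < j') :
    off lam j + lam j ≤ off lam j' := by
  rw [off, off]
  have hsub : insert j (Finset.univ.filter (fun k : Fin l => k < j))
      ⊆ Finset.univ.filter (fun k : Fin l => k < j') := by
    intro k hk
    simp only [Finset.mem_insert, Finset.mem_filter, Finset.mem_univ, true_and] at *
    rcases hk with rfl | hk
    · exact h
    · exact hk.trans h
  calc off lam j + lam j = ∑ k ∈ insert j (Finset.univ.filter (fun k : Fin l => k < j)), lam k := by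
        rw [Finset.sum_insert (by simp), off]; ring
    _ ≤ _ := Finset.sum_le_sum_of_subset hsub

lemma block_disjoint (lam : Fin l → ℕ) {j j' : Fin l} (h : j ≠ j') :
    Disjoint (block n lam j) (block n lam j') := by
  rw [Finset.disjoint_left]
  intro i hi hi'
  simp only [block, Finset.mem_filter, Finset.mem_univ, true_and] at hi hi'
  rcases lt_or_gt_of_ne h with hlt | hlt
  · have := off_mono_strict lam hlt; omega
  · have := off_mono_strict lam hlt; omega

lemma block_map_val (lam : Fin l → ℕ) (hsum : ∑ j, lam j = n + 1) (j : Fin l) :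
    (block n lam j).map Fin.valEmbedding = Finset.Ico (off lam j) (off lam j + lam j) := by
  have hb := off_add_le lam hsum j
  ext t
  simp only [Finset.mem_map, block, Finset.mem_filter, Finset.mem_univ, true_and,
    Fin.valEmbedding_apply, Finset.mem_Ico]
  constructor
  · rintro ⟨i, hi, rfl⟩; exact hi
  · intro ht; exact ⟨⟨t, by omega⟩, ht, rfl⟩

lemma card_block (lam : Fin l → ℕ) (hsum : ∑ j, lam j = n + 1) (j : Fin l) :
    (block n lam j).card = lam j := by
  have := congrArg Finset.card (block_map_val (n := n) lam hsum j)
  simpa using this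

lemma biUnion_block_univ (lam : Fin l → ℕ) (hsum : ∑ j, lam j = n + 1) :
    Finset.univ.biUnion (fun j => block n lam j) = (Finset.univ : Finset (Fin (n+1))) := by
  apply Finset.eq_univ_of_card
  rw [Finset.card_biUnion (fun j _ j' _ h => block_disjoint lam h)]
  simp only [card_block lam hsum]
  simp [hsum]

/-- `quotPart` as a linear map. -/
noncomputable def Qlin (n l : ℕ) (lam : Fin l → ℕ) : (Fin (n+1) → ℝ) →ₗ[ℝ] (Fin l → ℝ) where
  toFun b := fun j => ∑ i ∈ block n lam j, b i
  map_add' b c := by funext j; simp [Finset.sum_add_distrib]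
  map_smul' r b := by funext j; simp [Finset.mul_sum]

lemma quotPart_eq_Qlin (lam : Fin l → ℕ) : quotPart l lam = ⇑(Qlin n l lam) := rfl


/-- The polytope, described with `g`. -/
def Pg (n : ℕ) (a : Fin (n+1) → ℤ) (l : ℕ) (lam : Fin l → ℕ) : Set (Fin l → ℝ) :=
  {x | (∑ j, x j) = g n a (n+1) ∧
    ∀ I : Finset (Fin l), ∑ j ∈ I, x j ≤ g n a (lams lam I)}

lemma lams_le (lam : Fin l → ℕ) (hsum : ∑ j, lam j = n + 1) (I : Finset (Fin l)) :
    lams lam I ≤ n + 1 := by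
  rw [← hsum]
  exact Finset.sum_le_sum_of_subset (Finset.subset_univ I)

/-- `Pg` matches the RHS set of the theorem. -/
lemma Pg_eq_RHS (a : Fin (n+1) → ℤ) (lam : Fin l → ℕ) (hsum : ∑ j, lam j = n + 1) :
    Pg n a l lam = {x : Fin l → ℝ | (∑ j, x j) = (∑ t, (a t : ℝ)) ∧
      ∀ I : Finset (Fin l), ∑ j ∈ I, x j ≤
        ∑ t ∈ Finset.univ.filter (fun t : Fin (n+1) => t.1 < ∑ j ∈ I, lam j), (a t : ℝ)} := by
  have hS : (∑ t, (a t : ℝ)) = g n a (n+1) := by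
    rw [← Bf_eq_g (le_refl (n+1))]
    congr 1
    ext t; simp [t.2]; exact Nat.lt_succ_iff.mp t.2
  ext x
  simp only [Pg, Set.mem_setOf_eq, hS]
  constructor
  · rintro ⟨h1, h2⟩
    refine ⟨h1, fun I => ?_⟩
    have hll : (∑ j ∈ I, lam j) = lams lam I := rfl
    rw [hll, Bf_eq_g (lams_le lam hsum I)]
    exact h2 I
  · rintro ⟨h1, h2⟩
    refine ⟨h1, fun I => ?_⟩
    have := h2 I
    have hll : (∑ j ∈ I, lam j) = lams lam I := rfl
    rw [hll, Bf_eq_g (lams_le lam hsum I)] at this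
    exact this

lemma Pg_convex (a : Fin (n+1) → ℤ) (lam : Fin l → ℕ) : Convex ℝ (Pg n a l lam) := by
  rintro x ⟨hx1, hx2⟩ y ⟨hy1, hy2⟩ s t hs ht hst
  constructor
  · have e : (∑ j, (s • x + t • y) j) = s * (∑ j, x j) + t * (∑ j, y j) := by
      simp [Finset.sum_add_distrib, Finset.mul_sum]
    rw [e, hx1, hy1]
    linear_combination g n a (n+1) * hst
  · intro I
    have e : (∑ j ∈ I, (s • x + t • y) j) = s * (∑ j ∈ I, x j) + t * (∑ j ∈ I, y j) := by
      simp [Finset.sum_add_distrib, Finset.mul_sum]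
    rw [e]
    have hg : s * g n a (lams lam I) + t * g n a (lams lam I) = g n a (lams lam I) := by
      linear_combination g n a (lams lam I) * hst
    have h1 := mul_le_mul_of_nonneg_left (hx2 I) hs
    have h2 := mul_le_mul_of_nonneg_left (hy2 I) ht
    linarith

lemma Pg_closed (a : Fin (n+1) → ℤ) (lam : Fin l → ℕ) : IsClosed (Pg n a l lam) := by
  have h1 : IsClosed {x : Fin l → ℝ | (∑ j, x j) = g n a (n+1)} :=
    isClosed_eq (by continuity) continuous_const
  have h2 : ∀ I : Finset (Fin l), IsClosed {x : Fin l → ℝ | ∑ j ∈ I, x j ≤ g n a (lams lam I)} :=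
    fun I => isClosed_le (by continuity) continuous_const
  have : Pg n a l lam = {x : Fin l → ℝ | (∑ j, x j) = g n a (n+1)} ∩
      ⋂ I : Finset (Fin l), {x | ∑ j ∈ I, x j ≤ g n a (lams lam I)} := by
    ext x; simp [Pg, Set.mem_iInter]
  rw [this]
  exact h1.inter (isClosed_iInter h2)

lemma Pg_bounded (a : Fin (n+1) → ℤ) (lam : Fin l → ℕ) :
    Pg n a l lam ⊆ Set.Icc
      (fun j => g n a (n+1) - g n a (lams lam (Finset.univ.erase j)))
      (fun j => g n a (lams lam {j})) := by
  rintro x ⟨hx1, hx2⟩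
  constructor
  · intro j
    have h2 := hx2 (Finset.univ.erase j)
    have hsplit : ∑ j' ∈ Finset.univ.erase j, x j' + x j = ∑ j', x j' := by
      rw [Finset.sum_erase_add _ _ (Finset.mem_univ j)]
    simp only []
    rw [hx1] at hsplit
    linarith
  · intro j
    have := hx2 {j}
    simpa using this

lemma Pg_compact (a : Fin (n+1) → ℤ) (lam : Fin l → ℕ) : IsCompact (Pg n a l lam) :=
  IsCompact.of_isClosed_subset isCompact_Icc (Pg_closed a lam) (Pg_bounded a lam)

/-- Every permuted point maps into `Pg`. -/
lemma quot_perm_mem_Pg (a : Fin (n+1) → ℤ) (ha : ∀ s t : Fin (n+1), s ≤ t → a t ≤ a s)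
    (lam : Fin l → ℕ) (hsum : ∑ j, lam j = n + 1) (σ : Equiv.Perm (Fin (n+1))) :
    quotPart l lam (fun i => ((a (σ i) : ℝ))) ∈ Pg n a l lam := by
  have key : ∀ I : Finset (Fin l),
      ∑ j ∈ I, quotPart l lam (fun i => ((a (σ i) : ℝ))) j
        = ∑ i ∈ (I.biUnion (fun j => block n lam j)).image σ, (a i : ℝ) := by
    intro I
    rw [Finset.sum_image (fun i _ i' _ h => σ.injective h)]
    rw [Finset.sum_biUnion]
    · exact Finset.sum_congr rfl (fun j _ => quotPart_eq lam _ j)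
    · exact fun j _ j' _ h => block_disjoint lam h
  constructor
  · rw [key Finset.univ, biUnion_block_univ lam hsum]
    have himg : (Finset.univ : Finset (Fin (n+1))).image σ = Finset.univ := by
      ext i
      simp only [Finset.mem_image, Finset.mem_univ, true_and, iff_true]
      exact ⟨σ.symm i, by simp⟩
    rw [himg, ← Bf_eq_g (le_refl (n+1))]
    congr 1
    ext t; simp [t.2]; exact Nat.lt_succ_iff.mp t.2
  · intro I
    rw [key I]
    have hcard : ((I.biUnion (fun j => block n lam j)).image σ).card = lams lam I := by
      rw [Finset.card_image_of_injective _ σ.injective,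
        Finset.card_biUnion (fun j _ j' _ h => block_disjoint lam h)]
      simp [card_block lam hsum, lams]
    rw [← hcard]
    exact sum_le_g ha _


def TightAt (n : ℕ) (a : Fin (n+1) → ℤ) {l : ℕ} (lam : Fin l → ℕ) (x : Fin l → ℝ)
    (T : Finset (Fin l)) : Prop :=
  ∑ j ∈ T, x j = g n a (lams lam T)

lemma tight_univ {a : Fin (n+1) → ℤ} {lam : Fin l → ℕ} {x : Fin l → ℝ}
    (hsum : ∑ j, lam j = n + 1) (hx : x ∈ Pg n a l lam) :
    TightAt n a lam x Finset.univ := by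
  have : lams lam Finset.univ = n + 1 := hsum
  rw [TightAt, this]
  exact hx.1

lemma tight_empty (a : Fin (n+1) → ℤ) (lam : Fin l → ℕ) (x : Fin l → ℝ) :
    TightAt n a lam x ∅ := by simp [TightAt, lams, g]

lemma lams_union_inter (lam : Fin l → ℕ) (T T' : Finset (Fin l)) :
    lams lam (T ∪ T') + lams lam (T ∩ T') = lams lam T + lams lam T' := by
  simp only [lams]
  exact Finset.sum_union_inter

/-- Tight sets are closed under union and intersection. -/
lemma tight_closure {a : Fin (n+1) → ℤ} (ha : ∀ s t : Fin (n+1), s ≤ t → a t ≤ a s)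
    {lam : Fin l → ℕ} (hsum : ∑ j, lam j = n + 1) {x : Fin l → ℝ}
    (hx : x ∈ Pg n a l lam) {T T' : Finset (Fin l)}
    (hT : TightAt n a lam x T) (hT' : TightAt n a lam x T') :
    TightAt n a lam x (T ∪ T') ∧ TightAt n a lam x (T ∩ T') := by
  have hsx : ∑ j ∈ T ∪ T', x j + ∑ j ∈ T ∩ T', x j = ∑ j ∈ T, x j + ∑ j ∈ T', x j :=
    Finset.sum_union_inter
  -- submodularity
  have hsubmod : g n a (lams lam (T ∪ T')) + g n a (lams lam (T ∩ T'))
      ≤ g n a (lams lam T) + g n a (lams lam T') := by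
    have h1 : lams lam T = lams lam (T ∩ T') + lams lam (T \ T') := by
      simp only [lams]
      rw [← Finset.sum_union (Finset.disjoint_sdiff_inter T T').symm]
      · congr 1
        ext j; simp only [Finset.mem_union, Finset.mem_inter, Finset.mem_sdiff]; tauto
    have h2 : lams lam (T ∪ T') = lams lam T' + lams lam (T \ T') := by
      simp only [lams]
      rw [← Finset.sum_union (by exact Finset.sdiff_disjoint.symm)]
      congr 1
      ext j; simp only [Finset.mem_union, Finset.mem_sdiff]; tauto
    have hle : lams lam (T ∩ T') ≤ lams lam T' := by
      simp only [lams]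
      exact Finset.sum_le_sum_of_subset (by exact Finset.inter_subset_right)
    have := g_submod (a := a) ha (lams lam (T \ T')) hle
    rw [← h1, ← h2] at this
    linarith
  have hu := hx.2 (T ∪ T')
  have hi := hx.2 (T ∩ T')
  rw [TightAt] at hT hT' ⊢
  constructor
  · linarith
  · rw [TightAt]; linarith

/-- Perturbation lemma: if `s,t` are never separated by a tight set, we can move in
direction `±(e_s - e_t)` without leaving `Pg`. -/
lemma perturb {a : Fin (n+1) → ℤ} {lam : Fin l → ℕ} (hsum : ∑ j, lam j = n + 1)
    {x : Fin l → ℝ}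
    (hx : x ∈ Pg n a l lam) {s t : Fin l} (hst : s ≠ t)
    (hsep : ∀ T : Finset (Fin l), TightAt n a lam x T → (s ∈ T ↔ t ∈ T)) :
    ∃ δ : ℝ, 0 < δ ∧
      x + δ • (Pi.single s (1:ℝ) - Pi.single t 1) ∈ Pg n a l lam ∧
      x - δ • (Pi.single s (1:ℝ) - Pi.single t 1) ∈ Pg n a l lam := by
  classical
  set d : Fin l → ℝ := Pi.single s (1:ℝ) - Pi.single t 1 with hd
  have hdsum : ∀ T : Finset (Fin l), ∑ j ∈ T, d j =
      (if s ∈ T then (1:ℝ) else 0) - (if t ∈ T then (1:ℝ) else 0) := by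
    intro T
    simp only [hd, Pi.sub_apply, Finset.sum_sub_distrib]
    congr 1 <;>
    · simp [Pi.single_apply, Finset.sum_ite_eq' T]
  have hdabs : ∀ T : Finset (Fin l), |∑ j ∈ T, d j| ≤ 1 := by
    intro T
    rw [hdsum]
    split_ifs <;> simp
  have hdtight : ∀ T : Finset (Fin l), TightAt n a lam x T → ∑ j ∈ T, d j = 0 := by
    intro T hT
    rw [hdsum]
    rcases (hsep T hT) with ⟨h1, h2⟩
    by_cases hs : s ∈ T
    · simp [hs, h1 hs]
    · have ht' : t ∉ T := fun h => hs (h2 h)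
      simp [hs, ht']
  set 𝒩 : Finset (Finset (Fin l)) := Finset.univ.filter (fun T => ¬ TightAt n a lam x T)
    with h𝒩
  set δ : ℝ := if h : 𝒩.Nonempty then 𝒩.inf' h (fun T => g n a (lams lam T) - ∑ j ∈ T, x j)
      else 1 with hδ
  have hslack : ∀ T ∈ 𝒩, 0 < g n a (lams lam T) - ∑ j ∈ T, x j := by
    intro T hT
    have h1 := hx.2 T
    have h2 : ¬ TightAt n a lam x T := by
      simpa [h𝒩] using hT
    rw [TightAt] at h2
    cases lt_or_eq_of_le h1 with
    | inl h => linarith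
    | inr h => exact absurd h h2
  have hδpos : 0 < δ := by
    rw [hδ]
    split_ifs with h
    · exact (Finset.lt_inf'_iff h).mpr (fun T hT => hslack T hT)
    · norm_num
  have hδle : ∀ T ∈ 𝒩, δ ≤ g n a (lams lam T) - ∑ j ∈ T, x j := by
    intro T hT
    rw [hδ]
    rw [dif_pos ⟨T, hT⟩]
    exact Finset.inf'_le _ hT
  have key : ∀ ε : ℝ, |ε| ≤ δ → x + ε • d ∈ Pg n a l lam := by
    intro ε hε
    have hsum' : ∀ T : Finset (Fin l), ∑ j ∈ T, (x + ε • d) j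
        = ∑ j ∈ T, x j + ε * ∑ j ∈ T, d j := by
      intro T
      simp [Finset.sum_add_distrib, Finset.mul_sum]
    constructor
    · have huniv : TightAt n a lam x Finset.univ := by
        have hl : lams lam Finset.univ = n + 1 := hsum
        rw [TightAt, hl]; exact hx.1
      rw [hsum' Finset.univ, hdtight _ huniv]
      simpa using hx.1
    · intro I
      rw [hsum' I]
      by_cases hI : TightAt n a lam x I
      · rw [hdtight _ hI, TightAt] at *
        rw [hI]
        simp
      · have hIm : I ∈ 𝒩 := by simp [h𝒩, hI]
        have h1 : ε * ∑ j ∈ I, d j ≤ δ := by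
          calc ε * ∑ j ∈ I, d j ≤ |ε * ∑ j ∈ I, d j| := le_abs_self _
            _ = |ε| * |∑ j ∈ I, d j| := abs_mul _ _
            _ ≤ δ * 1 := by
                apply mul_le_mul hε (hdabs I) (abs_nonneg _) (le_of_lt hδpos)
            _ = δ := mul_one δ
        have h2 := hδle I hIm
        linarith
  refine ⟨δ, hδpos, key δ (by rw [abs_of_pos hδpos]), ?_⟩
  have := key (-δ) (by rw [abs_neg, abs_of_pos hδpos])
  rw [neg_smul] at this
  rw [sub_eq_add_neg]
  exact this


/-- Atom lemma: if `d` vanishes on all tight sets and `d s ≠ 0`, there is `t ≠ s`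
never separated from `s` by a tight set. -/
lemma atom_lemma {a : Fin (n+1) → ℤ} (ha : ∀ s t : Fin (n+1), s ≤ t → a t ≤ a s)
    {lam : Fin l → ℕ} (hsum : ∑ j, lam j = n + 1) {x : Fin l → ℝ}
    (hx : x ∈ Pg n a l lam) (d : Fin l → ℝ)
    (hd : ∀ T : Finset (Fin l), TightAt n a lam x T → ∑ j ∈ T, d j = 0)
    {s : Fin l} (hs : d s ≠ 0) :
    ∃ t : Fin l, t ≠ s ∧ ∀ T : Finset (Fin l), TightAt n a lam x T → (s ∈ T ↔ t ∈ T) := by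
  classical
  set 𝒯s : Finset (Finset (Fin l)) :=
    Finset.univ.filter (fun T => TightAt n a lam x T ∧ s ∈ T) with h𝒯s
  set 𝒯c : Finset (Finset (Fin l)) :=
    Finset.univ.filter (fun T => TightAt n a lam x T ∧ s ∉ T) with h𝒯c
  have h𝒯s_ne : 𝒯s.Nonempty :=
    ⟨Finset.univ, by simp [h𝒯s, tight_univ hsum hx]⟩
  obtain ⟨T1, hT1⟩ : ∃ T : Finset (Fin l), T = 𝒯s.inf' h𝒯s_ne id := ⟨_, rfl⟩
  obtain ⟨T2, hT2⟩ : ∃ T : Finset (Fin l), T = 𝒯c.sup id := ⟨_, rfl⟩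
  -- inf' of a nonempty family of tight sets is tight
  have tight_inf' : ∀ (𝒮 : Finset (Finset (Fin l))) (h : 𝒮.Nonempty),
      (∀ T ∈ 𝒮, TightAt n a lam x T) → TightAt n a lam x (𝒮.inf' h id) := by
    intro 𝒮 h
    induction h using Finset.Nonempty.cons_induction with
    | singleton T => intro hT; simpa using hT T (by simp)
    | cons T 𝒮 hT hne ih =>
      intro hall
      rw [Finset.inf'_cons]
      have h1 : TightAt n a lam x T := hall T (by simp)
      have h2 : TightAt n a lam x (𝒮.inf' hne id) :=
        ih (fun T' hT' => hall T' (by simp [hT']))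
      have := (tight_closure ha hsum hx h1 h2).2
      exact this
  have tight_sup : ∀ (𝒮 : Finset (Finset (Fin l))),
      (∀ T ∈ 𝒮, TightAt n a lam x T) → TightAt n a lam x (𝒮.sup id) := by
    intro 𝒮
    induction 𝒮 using Finset.induction with
    | empty => intro _; simpa using tight_empty a lam x
    | insert _ _ hT ih =>
      rename_i T 𝒮
      intro hall
      rw [Finset.sup_insert]
      have h1 : TightAt n a lam x T := hall T (by simp)
      have h2 : TightAt n a lam x (𝒮.sup id) := ih (fun T' hT' => hall T' (by simp [hT']))
      have := (tight_closure ha hsum hx h1 h2).1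
      simpa [Finset.sup_eq_union] using this
  have hT1tight : TightAt n a lam x T1 := by
    rw [hT1]
    exact tight_inf' 𝒯s h𝒯s_ne (fun T hT => by simp [h𝒯s] at hT; exact hT.1)
  have hT2tight : TightAt n a lam x T2 := by
    rw [hT2]
    exact tight_sup 𝒯c (fun T hT => by simp [h𝒯c] at hT; exact hT.1)
  have hsT1 : s ∈ T1 := by
    rw [hT1]
    have : ({s} : Finset (Fin l)) ≤ 𝒯s.inf' h𝒯s_ne id := by
      apply Finset.le_inf'
      intro T hT
      simp only [h𝒯s, Finset.mem_filter] at hT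
      simpa using hT.2.2
    simpa using this
  have hsT2 : s ∉ T2 := by
    rw [hT2]
    intro hmem
    rw [Finset.mem_sup] at hmem
    obtain ⟨T, hT, hsT⟩ := hmem
    simp only [h𝒯c, Finset.mem_filter] at hT
    exact hT.2.2 (by simpa using hsT)
  -- T1 ∩ T2 is tight
  have hT12 : TightAt n a lam x (T1 ∩ T2) := (tight_closure ha hsum hx hT1tight hT2tight).2
  -- sum of d over A := T1 \ T2 is 0
  have hA : ∑ j ∈ T1 \ T2, d j = 0 := by
    have : T1 \ T2 = T1 \ (T1 ∩ T2) := by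
      ext j
      simp only [Finset.mem_sdiff, Finset.mem_inter]
      exact ⟨fun ⟨h1, h2⟩ => ⟨h1, fun hh => h2 hh.2⟩, fun ⟨h1, h2⟩ => ⟨h1, fun hh => h2 ⟨h1, hh⟩⟩⟩
    rw [this, Finset.sum_sdiff_eq_sub Finset.inter_subset_left,
      hd _ hT1tight, hd _ hT12, sub_zero]
  have hsA : s ∈ T1 \ T2 := Finset.mem_sdiff.mpr ⟨hsT1, hsT2⟩
  -- find t ≠ s in A with d t ≠ 0
  have : ∃ t ∈ (T1 \ T2).erase s, d t ≠ 0 := by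
    by_contra hcon
    push_neg at hcon
    have : ∑ j ∈ T1 \ T2, d j = d s := by
      rw [← Finset.add_sum_erase _ _ hsA, Finset.sum_eq_zero hcon, add_zero]
    rw [hA] at this
    exact hs this.symm
  obtain ⟨t, htmem, htd⟩ := this
  have htne : t ≠ s := (Finset.mem_erase.mp htmem).1
  have htA : t ∈ T1 \ T2 := (Finset.mem_erase.mp htmem).2
  refine ⟨t, htne, fun T hT => ?_⟩
  constructor
  · intro hsT
    have hTmem : T ∈ 𝒯s := by simp [h𝒯s, hT, hsT]
    have : T1 ≤ T := by rw [hT1]; exact Finset.inf'_le id hTmem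
    exact this (Finset.mem_sdiff.mp htA).1
  · intro htT
    by_contra hsT
    have hTmem : T ∈ 𝒯c := by simp [h𝒯c, hT, hsT]
    have : T ≤ T2 := by rw [hT2]; exact Finset.le_sup (f := id) hTmem
    exact (Finset.mem_sdiff.mp htA).2 (this htT)

/-- A point of `Pg` whose tight sets separate all pairs of coordinates is the image of a
permuted point. -/
lemma sep_mem_image {a : Fin (n+1) → ℤ} (ha : ∀ s t : Fin (n+1), s ≤ t → a t ≤ a s)
    {lam : Fin l → ℕ} (hsum : ∑ j, lam j = n + 1) {x : Fin l → ℝ}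
    (hx : x ∈ Pg n a l lam)
    (hsep : ∀ s t : Fin l, s ≠ t → ∃ T : Finset (Fin l),
      TightAt n a lam x T ∧ ¬(s ∈ T ↔ t ∈ T)) :
    ∃ σ : Equiv.Perm (Fin (n+1)), x = quotPart l lam (fun i => (a (σ i) : ℝ)) := by
  classical
  have hl : 0 < l := by
    rcases Nat.eq_zero_or_pos l with h | h
    · subst h; simp at hsum
    · exact h
  have hcarduniv : (Finset.univ : Finset (Fin l)).card = l := by simp
  -- Step lemma: each tight set ≠ univ extends by a single element to a tight set.
  have step : ∀ C : Finset (Fin l), TightAt n a lam x C → C ≠ Finset.univ →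
      ∃ s : Fin l, s ∉ C ∧ TightAt n a lam x (insert s C) := by
    intro C hC hne
    set 𝒮 : Finset (Finset (Fin l)) :=
      Finset.univ.filter (fun T => TightAt n a lam x T ∧ C ⊂ T) with h𝒮
    have h𝒮ne : 𝒮.Nonempty :=
      ⟨Finset.univ, by simp [h𝒮, tight_univ hsum hx, Finset.ssubset_univ_iff.mpr hne]⟩
    obtain ⟨T, hT𝒮, hTmin⟩ := Finset.exists_min_image 𝒮 Finset.card h𝒮ne
    have hTt : TightAt n a lam x T := by
      simp only [h𝒮, Finset.mem_filter] at hT𝒮; exact hT𝒮.2.1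
    have hCT : C ⊂ T := by
      simp only [h𝒮, Finset.mem_filter] at hT𝒮; exact hT𝒮.2.2
    have key : ∀ (u v : Fin l) (T₀ : Finset (Fin l)), u ∈ T \ C → v ∈ T \ C →
        TightAt n a lam x T₀ → u ∈ T₀ → v ∉ T₀ → False := by
      intro u v T₀ hu hv hT₀ huT₀ hvT₀
      rw [Finset.mem_sdiff] at hu hv
      have hint : TightAt n a lam x (T₀ ∩ T) := (tight_closure ha hsum hx hT₀ hTt).2
      have hT' : TightAt n a lam x (C ∪ T₀ ∩ T) := (tight_closure ha hsum hx hC hint).1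
      have hCsub : C ⊂ C ∪ T₀ ∩ T := by
        refine (Finset.ssubset_iff_of_subset Finset.subset_union_left).mpr ⟨u, ?_, hu.2⟩
        exact Finset.mem_union_right _ (Finset.mem_inter.mpr ⟨huT₀, hu.1⟩)
      have hsubT : C ∪ T₀ ∩ T ⊆ T :=
        Finset.union_subset hCT.subset Finset.inter_subset_right
      have hneT : C ∪ T₀ ∩ T ≠ T := by
        intro h
        have hvmem : v ∈ C ∪ T₀ ∩ T := by rw [h]; exact hv.1
        rcases Finset.mem_union.mp hvmem with h' | h'
        · exact hv.2 h'
        · exact hvT₀ (Finset.mem_inter.mp h').1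
      have hcardlt : (C ∪ T₀ ∩ T).card < T.card :=
        Finset.card_lt_card ⟨hsubT, fun h => hneT (Finset.Subset.antisymm hsubT h)⟩
      have hmem𝒮 : C ∪ T₀ ∩ T ∈ 𝒮 := by
        simp only [h𝒮, Finset.mem_filter, Finset.mem_univ, true_and]
        exact ⟨hT', hCsub⟩
      have := hTmin _ hmem𝒮
      omega
    obtain ⟨u, hu⟩ := Finset.exists_of_ssubset hCT
    have huniq : ∀ v ∈ T \ C, v = u := by
      intro v hv
      by_contra hvu
      obtain ⟨T₀, hT₀t, hT₀sep⟩ := hsep v u hvu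
      have humem : u ∈ T \ C := Finset.mem_sdiff.mpr ⟨hu.1, hu.2⟩
      by_cases hvT₀ : v ∈ T₀
      · have huT₀ : u ∉ T₀ := fun h => hT₀sep ⟨fun _ => h, fun _ => hvT₀⟩
        exact key v u T₀ hv humem hT₀t hvT₀ huT₀
      · have huT₀ : u ∈ T₀ := by
          by_contra h
          exact hT₀sep ⟨fun hh => absurd hh hvT₀, fun hh => absurd hh h⟩
        exact key u v T₀ humem hv hT₀t huT₀ hvT₀
    have hTeq : T = insert u C := by
      ext j
      simp only [Finset.mem_insert]
      constructor
      · intro hj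
        by_cases hjC : j ∈ C
        · exact Or.inr hjC
        · exact Or.inl (huniq j (Finset.mem_sdiff.mpr ⟨hj, hjC⟩))
      · rintro (rfl | hj)
        · exact hu.1
        · exact hCT.subset hj
    exact ⟨u, hu.2, hTeq ▸ hTt⟩
  -- Build the chain by iterating the step.
  have step' : ∀ C : Finset (Fin l), ∃ s : Fin l,
      (TightAt n a lam x C ∧ C ≠ Finset.univ) → s ∉ C ∧ TightAt n a lam x (insert s C) := by
    intro C
    by_cases h : TightAt n a lam x C ∧ C ≠ Finset.univ
    · obtain ⟨s, h1, h2⟩ := step C h.1 h.2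
      exact ⟨s, fun _ => ⟨h1, h2⟩⟩
    · exact ⟨⟨0, hl⟩, fun hc => absurd hc h⟩
  choose nxt hnxt using step'
  set f : Finset (Fin l) → Finset (Fin l) :=
    fun C => if TightAt n a lam x C ∧ C ≠ Finset.univ then insert (nxt C) C else C with hf
  set Ch : ℕ → Finset (Fin l) := fun k => f^[k] ∅ with hCh
  have hCh0 : Ch 0 = ∅ := rfl
  have hChsucc : ∀ k, Ch (k+1) = f (Ch k) := fun k => Function.iterate_succ_apply' f k ∅
  have hfpos : ∀ C, TightAt n a lam x C ∧ C ≠ Finset.univ → f C = insert (nxt C) C := by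
    intro C h; rw [hf]; simp only []; rw [if_pos h]
  have hfneg : ∀ C, TightAt n a lam x C → C = Finset.univ → f C = C := by
    intro C h1 h2; rw [hf]; simp only []; rw [if_neg]; push_neg; intro; exact h2
  have inv : ∀ k, TightAt n a lam x (Ch k) ∧ (Ch k).card = min k l := by
    intro k
    induction k with
    | zero => exact ⟨tight_empty a lam x, by simp [hCh0]⟩
    | succ k ih =>
      rw [hChsucc k]
      by_cases h : Ch k = Finset.univ
      · have hcard : min k l = l := by rw [← ih.2, h]; exact hcarduniv
        rw [hfneg _ ih.1 h]
        exact ⟨ih.1, by rw [ih.2]; omega⟩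
      · have hcond : TightAt n a lam x (Ch k) ∧ Ch k ≠ Finset.univ := ⟨ih.1, h⟩
        obtain ⟨hnot, htight⟩ := hnxt (Ch k) hcond
        have hklt : (Ch k).card < l := by
          have hle : (Ch k).card ≤ l := by rw [ih.2]; omega
          rcases lt_or_eq_of_le hle with h'' | h''
          · exact h''
          · exact absurd ((Finset.card_eq_iff_eq_univ _).mp
              (by rw [h'', Fintype.card_fin])) h
        rw [hfpos _ hcond]
        refine ⟨htight, ?_⟩
        rw [Finset.card_insert_of_notMem hnot, ih.2]
        rw [ih.2] at hklt
        omega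
  have hmono : ∀ k k', k ≤ k' → Ch k ⊆ Ch k' := by
    intro k k' hkk'
    induction k', hkk' using Nat.le_induction with
    | base => exact subset_rfl
    | succ m hm ih =>
      refine ih.trans ?_
      rw [hChsucc m, hf]
      simp only []
      split_ifs
      · exact Finset.subset_insert _ _
      · exact subset_rfl
  have hChuniv : Ch l = Finset.univ := by
    apply (Finset.card_eq_iff_eq_univ _).mp
    rw [(inv l).2, Fintype.card_fin]
    omega
  have hexists : ∀ s : Fin l, ∃ k, s ∈ Ch (k + 1) := by
    intro s
    refine ⟨l - 1, ?_⟩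
    have he : l - 1 + 1 = l := by omega
    rw [he, hChuniv]
    exact Finset.mem_univ s
  set ks : Fin l → ℕ := fun s => Nat.find (hexists s) with hks
  have hksmem : ∀ s, s ∈ Ch (ks s + 1) := fun s => Nat.find_spec (hexists s)
  have hksnot : ∀ s, s ∉ Ch (ks s) := by
    intro s
    rcases Nat.eq_zero_or_pos (ks s) with h | h
    · rw [show ks s = 0 from h, hCh0]; exact Finset.notMem_empty s
    · have hlt : ks s - 1 < ks s := by omega
      have hmin := Nat.find_min (hexists s) (m := ks s - 1) hlt
      have heq : ks s - 1 + 1 = ks s := by omega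
      rw [heq] at hmin
      exact hmin
  have hkslt : ∀ s, ks s < l := by
    intro s
    have hfind : ks s ≤ l - 1 := Nat.find_le (by
      have he : l - 1 + 1 = l := by omega
      rw [he, hChuniv]; exact Finset.mem_univ s)
    omega
  have hChne : ∀ k, k < l → Ch k ≠ Finset.univ := by
    intro k hk h
    have := (inv k).2
    rw [h, hcarduniv] at this
    omega
  have hinsert : ∀ s : Fin l, Ch (ks s + 1) = insert s (Ch (ks s)) := by
    intro s
    have hcond : TightAt n a lam x (Ch (ks s)) ∧ Ch (ks s) ≠ Finset.univ :=
      ⟨(inv (ks s)).1, hChne _ (hkslt s)⟩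
    have hfC : Ch (ks s + 1) = insert (nxt (Ch (ks s))) (Ch (ks s)) := by
      rw [hChsucc, hfpos _ hcond]
    have hs : s = nxt (Ch (ks s)) := by
      have hm := hksmem s
      rw [hfC] at hm
      rcases Finset.mem_insert.mp hm with h | h
      · exact h
      · exact absurd h (hksnot s)
    rw [hfC, ← hs]
  set N : Fin l → ℕ := fun s => lams lam (Ch (ks s)) with hN
  have hNs : ∀ s, N s = lams lam (Ch (ks s)) := fun s => rfl
  have hlamsins : ∀ s, lams lam (insert s (Ch (ks s))) = lam s + lams lam (Ch (ks s)) :=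
    fun s => by simp only [lams, Finset.sum_insert (hksnot s)]
  have hNsplit : ∀ s, N s + lam s = lam s + lams lam (Ch (ks s)) := by
    intro s; rw [hNs s]; omega
  have hNsucc : ∀ s, lams lam (Ch (ks s + 1)) = N s + lam s := by
    intro s; rw [hinsert s, hlamsins s, hNsplit s]
  have hxval : ∀ s : Fin l, x s = g n a (N s + lam s) - g n a (N s) := by
    intro s
    have h1 : TightAt n a lam x (Ch (ks s + 1)) := (inv _).1
    have h2 : TightAt n a lam x (Ch (ks s)) := (inv _).1
    rw [TightAt, hinsert s, Finset.sum_insert (hksnot s), hlamsins s] at h1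
    rw [TightAt] at h2
    rw [hNsplit s, hNs s]
    linarith
  have hNbound : ∀ s, N s + lam s ≤ n + 1 := by
    intro s
    rw [← hNsucc s, ← hsum]
    simp only [lams]
    exact Finset.sum_le_sum_of_subset (Finset.subset_univ _)
  have hdisj : ∀ s t : Fin l, s ≠ t → N s + lam s ≤ N t ∨ N t + lam t ≤ N s := by
    intro s t hst
    have hksne : ks s ≠ ks t := by
      intro h
      have h2 := hinsert t
      rw [← h, hinsert s] at h2
      have hmem : t ∈ insert s (Ch (ks s)) := by
        rw [h2]; exact Finset.mem_insert_self t _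
      rcases Finset.mem_insert.mp hmem with h' | h'
      · exact hst h'.symm
      · rw [h] at h'
        exact (hksnot t) h'
    rcases lt_or_gt_of_ne hksne with h | h
    · left
      have hsub : Ch (ks s + 1) ⊆ Ch (ks t) := hmono _ _ (by omega)
      calc N s + lam s = lams lam (Ch (ks s + 1)) := (hNsucc s).symm
        _ ≤ lams lam (Ch (ks t)) := by
            simp only [lams]; exact Finset.sum_le_sum_of_subset hsub
        _ = N t := (hNs t).symm
    · right
      have hsub : Ch (ks t + 1) ⊆ Ch (ks s) := hmono _ _ (by omega)
      calc N t + lam t = lams lam (Ch (ks t + 1)) := (hNsucc t).symm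
        _ ≤ lams lam (Ch (ks s)) := by
            simp only [lams]; exact Finset.sum_le_sum_of_subset hsub
        _ = N s := (hNs s).symm
  -- build the permutation
  have hcov : ∀ i : Fin (n+1), ∃ j : Fin l, i ∈ block n lam j := by
    intro i
    have hm : i ∈ Finset.univ.biUnion (fun j => block n lam j) := by
      rw [biUnion_block_univ lam hsum]; exact Finset.mem_univ i
    exact (Finset.mem_biUnion.mp hm).imp (fun j hj => hj.2)
  choose bIdx hbIdx using hcov
  have hbIdx_unique : ∀ (i : Fin (n+1)) (j : Fin l), i ∈ block n lam j → bIdx i = j := by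
    intro i j hij
    by_contra h
    exact (Finset.disjoint_left.mp (block_disjoint lam h) (hbIdx i)) hij
  have hblock_range : ∀ i : Fin (n+1),
      off lam (bIdx i) ≤ i.1 ∧ i.1 < off lam (bIdx i) + lam (bIdx i) := by
    intro i
    have hm := hbIdx i
    simp only [block, Finset.mem_filter] at hm
    exact hm.2
  set σ0 : Fin (n+1) → Fin (n+1) := fun i =>
    ⟨N (bIdx i) + (i.1 - off lam (bIdx i)), by
      have h1 := hblock_range i
      have h2 := hNbound (bIdx i)
      omega⟩ with hσ0
  have hσ0val : ∀ i : Fin (n+1), (σ0 i).1 = N (bIdx i) + (i.1 - off lam (bIdx i)) :=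
    fun i => rfl
  have hσ0inj : Function.Injective σ0 := by
    intro i i' h
    have hval : (σ0 i).1 = (σ0 i').1 := by rw [h]
    rw [hσ0val, hσ0val] at hval
    by_cases hjj : bIdx i = bIdx i'
    · have h1 := hblock_range i
      have h2 := hblock_range i'
      rw [hjj] at hval h1
      exact Fin.ext (by omega)
    · exfalso
      have h1 := hblock_range i
      have h2 := hblock_range i'
      rcases hdisj _ _ hjj with hd | hd <;> omega
  have hσbij : Function.Bijective σ0 := Finite.injective_iff_bijective.mp hσ0inj
  refine ⟨Equiv.ofBijective σ0 hσbij, ?_⟩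
  funext s
  have hσapp : ∀ i : Fin (n+1), (Equiv.ofBijective σ0 hσbij) i = σ0 i := fun i => rfl
  rw [quotPart_eq]
  have hsum_blk : ∑ i ∈ block n lam s, ((a ((Equiv.ofBijective σ0 hσbij) i) : ℝ))
      = ∑ i ∈ block n lam s, A n a (N s + (i.1 - off lam s)) := by
    apply Finset.sum_congr rfl
    intro i hi
    have hbi : bIdx i = s := hbIdx_unique i s hi
    rw [hσapp i, a_eq_A, hσ0val i, hbi]
  rw [hsum_blk]
  have hmap : ∑ i ∈ block n lam s, A n a (N s + (i.1 - off lam s))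
      = ∑ t ∈ Finset.Ico (off lam s) (off lam s + lam s), A n a (N s + (t - off lam s)) := by
    rw [← block_map_val lam hsum s, Finset.sum_map]
    rfl
  rw [hmap]
  have hIco1 : ∑ t ∈ Finset.Ico (off lam s) (off lam s + lam s), A n a (N s + (t - off lam s))
      = ∑ m ∈ Finset.range (lam s), A n a (N s + m) := by
    rw [Finset.sum_Ico_eq_sum_range]
    simp only [Nat.add_sub_cancel_left]
  have hIco2 : ∑ m ∈ Finset.range (lam s), A n a (N s + m)
      = ∑ t ∈ Finset.Ico (N s) (N s + lam s), A n a t := by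
    rw [Finset.sum_Ico_eq_sum_range]
    simp only [Nat.add_sub_cancel_left]
  rw [hIco1, hIco2, Finset.sum_Ico_eq_sub _ (by omega : N s ≤ N s + lam s)]
  rw [hxval s]
  rfl


lemma extreme_sep {a : Fin (n+1) → ℤ} {lam : Fin l → ℕ} (hsum : ∑ j, lam j = n + 1)
    {x : Fin l → ℝ} (hx : x ∈ Set.extremePoints ℝ (Pg n a l lam)) :
    ∀ s t : Fin l, s ≠ t → ∃ T : Finset (Fin l),
      TightAt n a lam x T ∧ ¬(s ∈ T ↔ t ∈ T) := by
  intro s t hst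
  by_contra hcon
  push_neg at hcon
  have hcon' : ∀ T : Finset (Fin l), TightAt n a lam x T → (s ∈ T ↔ t ∈ T) := by
    intro T hT
    exact (hcon T hT)
  obtain ⟨δ, hδ, h1, h2⟩ := perturb hsum hx.1 hst hcon'
  set d : Fin l → ℝ := Pi.single s (1:ℝ) - Pi.single t 1 with hd
  have hdne : d ≠ 0 := by
    intro h
    have hds : d s = 1 := by
      rw [hd]
      simp [Pi.single_apply, hst.symm]
    rw [h] at hds
    simp at hds
  have hopen : x ∈ openSegment ℝ (x + δ • d) (x - δ • d) := by
    refine ⟨1/2, 1/2, by norm_num, by norm_num, by norm_num, ?_⟩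
    module
  have := hx.2 h1 h2 hopen
  have hcontra : x + δ • d = x := this
  have : δ • d = 0 := by
    have := congrArg (· - x) hcontra
    simpa [add_sub_cancel_left] using this
  rcases smul_eq_zero.mp this with h | h
  · exact hδ.ne' h
  · exact hdne h

/-- Part 1: the image equals `Pg`. -/
lemma image_eq_Pg {a : Fin (n+1) → ℤ} (ha : ∀ s t : Fin (n+1), s ≤ t → a t ≤ a s)
    {lam : Fin l → ℕ} (hsum : ∑ j, lam j = n + 1) :
    quotPart l lam '' permA (fun t => (a t : ℝ)) = Pg n a l lam := by
  classical
  set V : Set (Fin (n+1) → ℝ) :=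
    {x | ∃ σ : Equiv.Perm (Fin (n+1)), x = fun i => ((a (σ i) : ℝ))} with hV
  have hVfin : V.Finite := by
    have : V = Set.range (fun σ : Equiv.Perm (Fin (n+1)) => fun i => ((a (σ i) : ℝ))) := by
      ext y; simp [hV, Set.mem_range, eq_comm]
    rw [this]
    exact Set.finite_range _
  have himg : quotPart l lam '' permA (fun t => (a t : ℝ))
      = convexHull ℝ (quotPart l lam '' V) := by
    rw [permA, quotPart_eq_Qlin (n := n) lam]
    exact LinearMap.image_convexHull _ _
  rw [himg]
  apply Set.Subset.antisymm
  · apply convexHull_min _ (Pg_convex a lam)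
    rintro y ⟨z, ⟨σ, rfl⟩, rfl⟩
    exact quot_perm_mem_Pg a ha lam hsum σ
  · have hKM := closure_convexHull_extremePoints (Pg_compact a lam) (Pg_convex a lam)
    have hext : (Pg n a l lam).extremePoints ℝ ⊆ quotPart l lam '' V := by
      intro x hx
      obtain ⟨σ, hσ⟩ := sep_mem_image ha hsum hx.1 (extreme_sep hsum hx)
      exact ⟨_, ⟨σ, rfl⟩, hσ.symm⟩
    calc Pg n a l lam = closure (convexHull ℝ ((Pg n a l lam).extremePoints ℝ)) := hKM.symm
      _ ⊆ closure (convexHull ℝ (quotPart l lam '' V)) :=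
          closure_mono (convexHull_mono hext)
      _ = convexHull ℝ (quotPart l lam '' V) :=
          (Set.Finite.isClosed_convexHull (𝕜 := ℝ) (hVfin.image _)).closure_eq

end TQFD

/-- the facet description of the quotient `quot_λ(Π(a))`:
it equals the set of `x ∈ ℝ^{ℓ(λ)}` with `Σ x_j = Σ a_t` and
`Σ_{j∈I} x_j ≤ a_1 + ⋯ + a_{λ(I)}` for all `I ⊆ [ℓ(λ)]`, where `λ(I) = Σ_{j∈I} λ_j`.
In particular `quot_λ(Π(a))` is a generalized permutohedron: every edge of it has
direction `e_s − e_t`. -/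
theorem typeA_quot_facet_description (n : ℕ) (a : Fin (n + 1) → ℤ)
    (ha : ∀ s t : Fin (n + 1), s ≤ t → a t ≤ a s)
    (l : ℕ) (lam : Fin l → ℕ) (hpos : ∀ j, 0 < lam j) (hanti : Antitone lam)
    (hsum : ∑ j, lam j = n + 1) :
    quotPart l lam '' permA (fun t => (a t : ℝ)) =
        {x : Fin l → ℝ | (∑ j, x j) = (∑ t, (a t : ℝ)) ∧
          ∀ I : Finset (Fin l), ∑ j ∈ I, x j ≤
            ∑ t ∈ Finset.univ.filter (fun t : Fin (n + 1) => t.1 < ∑ j ∈ I, lam j),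
              (a t : ℝ)} ∧
      ∀ (φ : (Fin l → ℝ) →ₗ[ℝ] ℝ) (u w : Fin l → ℝ),
        u ∈ quotPart l lam '' permA (fun t => (a t : ℝ)) →
        w ∈ quotPart l lam '' permA (fun t => (a t : ℝ)) → u ≠ w →
        {x | x ∈ quotPart l lam '' permA (fun t => (a t : ℝ)) ∧
            ∀ y ∈ quotPart l lam '' permA (fun t => (a t : ℝ)), φ y ≤ φ x} =
          segment ℝ u w →
        ∃ (s t : Fin l) (c : ℝ), w - u = c • (Pi.single s (1 : ℝ) - Pi.single t 1) := by
  classical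
  have himg := TQFD.image_eq_Pg ha hsum
  constructor
  · rw [himg]
    exact TQFD.Pg_eq_RHS a lam hsum
  · intro φ u w hu hw hne hface
    rw [himg] at hu hw hface
    set m : Fin l → ℝ := (1/2 : ℝ) • u + (1/2 : ℝ) • w with hm
    have hmseg : m ∈ segment ℝ u w := ⟨1/2, 1/2, by norm_num, by norm_num, by norm_num, rfl⟩
    have hmF : m ∈ TQFD.Pg n a l lam ∧ ∀ y ∈ TQFD.Pg n a l lam, φ y ≤ φ m := by
      have : m ∈ {x | x ∈ TQFD.Pg n a l lam ∧ ∀ y ∈ TQFD.Pg n a l lam, φ y ≤ φ x} := by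
        rw [hface]; exact hmseg
      exact this
    obtain ⟨hmPg, hmax⟩ := hmF
    set d : Fin l → ℝ := w - u with hdd
    have hdne : d ≠ 0 := sub_ne_zero.mpr (Ne.symm hne)
    obtain ⟨s, hs⟩ : ∃ s, d s ≠ 0 := Function.ne_iff.mp hdne
    have hdtight : ∀ T : Finset (Fin l), TQFD.TightAt n a lam m T → ∑ j ∈ T, d j = 0 := by
      intro T hT
      have huT := hu.2 T
      have hwT := hw.2 T
      have hmT : ∑ j ∈ T, m j = (1/2) * (∑ j ∈ T, u j) + (1/2) * (∑ j ∈ T, w j) := by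
        simp [hm, Finset.sum_add_distrib, Finset.mul_sum]
      rw [TQFD.TightAt] at hT
      have hwT' : ∑ j ∈ T, w j = TQFD.g n a (TQFD.lams lam T) := by linarith
      have huT' : ∑ j ∈ T, u j = TQFD.g n a (TQFD.lams lam T) := by linarith
      have : ∑ j ∈ T, d j = ∑ j ∈ T, w j - ∑ j ∈ T, u j := by
        simp [hdd, Finset.sum_sub_distrib]
      rw [this, hwT', huT']
      ring
    obtain ⟨t, hts, hsept⟩ := TQFD.atom_lemma ha hsum hmPg d hdtight hs
    have hst : s ≠ t := Ne.symm hts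
    have hsep' : ∀ T : Finset (Fin l), TQFD.TightAt n a lam m T → (s ∈ T ↔ t ∈ T) :=
      hsept
    obtain ⟨δ, hδ, hy1, hy2⟩ := TQFD.perturb hsum hmPg hst hsep'
    set d' : Fin l → ℝ := Pi.single s (1:ℝ) - Pi.single t 1 with hd'
    have hd'ne : d' ≠ 0 := by
      intro h
      have hds : d' s = 1 := by
        rw [hd']; simp [Pi.single_apply, hst.symm]
      rw [h] at hds; simp at hds
    have hφ1 : φ (m + δ • d') = φ m + δ * φ d' := by
      rw [map_add, map_smul]; rfl
    have hφ2 : φ (m - δ • d') = φ m - δ * φ d' := by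
      rw [map_sub, map_smul]; rfl
    have hle1 : φ (m + δ • d') ≤ φ m := hmax _ hy1
    have hle2 : φ (m - δ • d') ≤ φ m := hmax _ hy2
    have hφeq1 : φ (m + δ • d') = φ m := by rw [hφ1] at hle1 ⊢; rw [hφ2] at hle2; linarith
    have hmem1 : m + δ • d' ∈ segment ℝ u w := by
      rw [← hface]
      exact ⟨hy1, fun y hy => (hmax y hy).trans_eq hφeq1.symm⟩
    have hφeq2 : φ (m - δ • d') = φ m := by rw [hφ1] at hle1; rw [hφ2] at hle2 ⊢; linarith
    have hmem2 : m - δ • d' ∈ segment ℝ u w := by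
      rw [← hface]
      exact ⟨hy2, fun y hy => (hmax y hy).trans_eq hφeq2.symm⟩
    obtain ⟨α1, β1, hα1, hβ1, hab1, he1⟩ := hmem1
    obtain ⟨α2, β2, hα2, hβ2, hab2, he2⟩ := hmem2
    have e1 : (m + δ • d') - (m - δ • d') = (2*δ) • d' := by module
    have e2 : (m + δ • d') - (m - δ • d') = (β1 - β2) • (w - u) := by
      rw [← he1, ← he2]
      have hα1' : α1 = 1 - β1 := by linarith
      have hα2' : α2 = 1 - β2 := by linarith
      rw [hα1', hα2']
      module
    have hEq : (β1 - β2) • (w - u) = (2*δ) • d' := by rw [← e2, e1]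
    have hc0 : β1 - β2 ≠ 0 := by
      intro h
      rw [h, zero_smul] at hEq
      have : d' = 0 := by
        have h2δ : (2*δ) ≠ 0 := by positivity
        exact (smul_eq_zero.mp hEq.symm).resolve_left h2δ
      exact hd'ne this
    have hfinal : d = ((β1 - β2)⁻¹ * (2*δ)) • d' := by
      rw [← smul_smul, hdd, ← hEq, smul_smul, inv_mul_cancel₀ hc0, one_smul]
    exact ⟨s, t, (β1 - β2)⁻¹ * (2*δ), hfinal⟩
end

section
/- Let Φ = A_n be the root system with roots e_i − e_j (i ≠ j) in ℝ^{n+1}. Let λ ∈ P_{≥0} be a dominant weight, μ ∈ Q+λ, and X ⊆ Φ^+. Then every vertex of the slice (μ + Span_ℝ(X)) ∩ Π(λ) belongs to Q+λ; in particular, the slices of permutohedra in Type A have lattice vertices. -/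
open Finset

section Aux

variable {n : ℕ}


/-- extended coefficient sequence -/
noncomputable def aR (a : Fin (n+1) → ℝ) (k : ℕ) : ℝ :=
  if h : k < n + 1 then a ⟨k, h⟩ else 0

/-- partial sums of the `n+1` largest entries -/
noncomputable def fw (a : Fin (n+1) → ℝ) (k : ℕ) : ℝ := ∑ i ∈ range k, aR a i

lemma fw_succ (a : Fin (n+1) → ℝ) (k : ℕ) : fw a (k+1) = fw a k + aR a k := by
  simp [fw, Finset.sum_range_succ]

lemma fw_zero (a : Fin (n+1) → ℝ) : fw a 0 = 0 := by simp [fw]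

lemma fw_univ (a : Fin (n+1) → ℝ) : fw a (n+1) = ∑ i, a i := by
  rw [fw, ← Fin.sum_univ_eq_sum_range]
  refine Finset.sum_congr rfl fun i _ => ?_
  simp [aR, i.isLt]

lemma aR_antitone {a : Fin (n+1) → ℝ} (ha : ∀ s t : Fin (n+1), s ≤ t → a t ≤ a s)
    {j k : ℕ} (hjk : j ≤ k) (hk : k < n + 1) : aR a k ≤ aR a j := by
  have hj : j < n + 1 := lt_of_le_of_lt hjk hk
  simp only [aR, dif_pos hj, dif_pos hk]
  exact ha ⟨j, hj⟩ ⟨k, hk⟩ hjk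

/-- concavity of fw -/
lemma fw_concave {a : Fin (n+1) → ℝ} (ha : ∀ s t : Fin (n+1), s ≤ t → a t ≤ a s)
    {p s u t : ℕ} (hps : p ≤ s) (hsu : s ≤ u) (hu : u ≤ n + 1) (ht : t ≤ n + 1)
    (hsum : u + p = s + t) : fw a u + fw a p ≤ fw a s + fw a t := by
  have hpt : p ≤ t := by omega
  have h1 : fw a u - fw a s = ∑ i ∈ Finset.range (u - s), aR a (s + i) := by
    rw [eq_comm, ← Finset.sum_Ico_eq_sum_range]
    rw [Finset.sum_Ico_eq_sub _ hsu]; rfl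
  have h2 : fw a t - fw a p = ∑ i ∈ Finset.range (t - p), aR a (p + i) := by
    rw [eq_comm, ← Finset.sum_Ico_eq_sum_range]
    rw [Finset.sum_Ico_eq_sub _ hpt]; rfl
  have hm : u - s = t - p := by omega
  have key : fw a u - fw a s ≤ fw a t - fw a p := by
    rw [h1, h2, ← hm]
    refine Finset.sum_le_sum fun i hi => ?_
    simp only [Finset.mem_range] at hi
    exact aR_antitone ha (by omega) (by omega)
  linarith

/-- sum over any subset is at most the sum of the largest values -/
lemma sum_le_fw {a : Fin (n+1) → ℝ} (ha : ∀ s t : Fin (n+1), s ≤ t → a t ≤ a s)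
    (S : Finset (Fin (n+1))) : ∑ i ∈ S, a i ≤ fw a S.card := by
  classical
  set k := S.card with hk
  have hkn : k ≤ n + 1 := by
    rw [hk]; simpa using Finset.card_le_card (Finset.subset_univ S)
  have hiso := S.orderIsoOfFin hk.symm
  have hmono : StrictMono fun j : Fin k => ((S.orderIsoOfFin hk.symm j : Fin (n+1)) : ℕ) := by
    intro x y hxy
    exact Fin.lt_iff_val_lt_val.mp ((S.orderIsoOfFin hk.symm).lt_iff_lt.mpr hxy)
  have hle : ∀ m (h : m < k), (m:ℕ) ≤ ((S.orderIsoOfFin hk.symm ⟨m, h⟩ : Fin (n+1)) : ℕ) := by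
    intro m
    induction m with
    | zero => intro h; exact Nat.zero_le _
    | succ m ih =>
      intro h
      have h' : m < k := by omega
      have h2 := hmono (show (⟨m, h'⟩ : Fin k) < ⟨m+1, h⟩ from Nat.lt_succ_self m)
      have h3 := ih h'
      simp only [Fin.lt_iff_val_lt_val] at h2
      omega
  calc ∑ i ∈ S, a i = ∑ j : Fin k, a (S.orderIsoOfFin hk.symm j : Fin (n+1)) := by
        rw [← Finset.sum_coe_sort S a]
        exact (Fintype.sum_equiv (S.orderIsoOfFin hk.symm).toEquiv _ _ fun j => rfl).symm
    _ ≤ ∑ j : Fin k, aR a j := by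
        refine Finset.sum_le_sum fun j _ => ?_
        have h1 : (j:ℕ) < n + 1 := lt_of_lt_of_le j.isLt hkn
        rw [aR, dif_pos h1]
        exact ha ⟨j, h1⟩ _ (hle j j.isLt)
    _ = fw a k := by rw [fw, ← Fin.sum_univ_eq_sum_range]
section chain

variable {a : Fin (n+1) → ℝ} (ha : ∀ s t : Fin (n+1), s ≤ t → a t ≤ a s)
variable {v : Fin (n+1) → ℝ}


lemma tight_empty : ∑ i ∈ (∅ : Finset (Fin (n+1))), v i = fw a (∅ : Finset (Fin (n+1))).card := by
  simp [fw]

lemma tight_univ (hsum : ∑ i, v i = ∑ i, a i) :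
    ∑ i ∈ (univ : Finset (Fin (n+1))), v i = fw a (univ : Finset (Fin (n+1))).card := by
  rw [Finset.card_univ, Fintype.card_fin, fw_univ]
  exact hsum

lemma tight_uncross (ha : ∀ s t : Fin (n+1), s ≤ t → a t ≤ a s) (hineq : ∀ S : Finset (Fin (n+1)), ∑ i ∈ S, v i ≤ fw a S.card)
    {S T : Finset (Fin (n+1))} (hS : ∑ i ∈ S, v i = fw a S.card)
    (hT : ∑ i ∈ T, v i = fw a T.card) :
    (∑ i ∈ S ∪ T, v i = fw a (S ∪ T).card) ∧ (∑ i ∈ S ∩ T, v i = fw a (S ∩ T).card) := by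
  have hcard : (S ∪ T).card + (S ∩ T).card = S.card + T.card := card_union_add_card_inter S T
  have hsum : (∑ i ∈ S ∪ T, v i) + (∑ i ∈ S ∩ T, v i) = (∑ i ∈ S, v i) + (∑ i ∈ T, v i) :=
    sum_union_inter
  have h1 := hineq (S ∪ T)
  have h2 := hineq (S ∩ T)
  have h3 : fw a (S ∪ T).card + fw a (S ∩ T).card ≤ fw a S.card + fw a T.card := by
    refine fw_concave ha (card_le_card inter_subset_left) (card_le_card subset_union_left)
      ?_ ?_ ?_
    · simpa using card_le_card (subset_univ (S ∪ T))
    · simpa using card_le_card (subset_univ T)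
    · omega
  constructor <;> linarith

/-- The chain structure at a point of the H-permutohedron. -/
lemma chain_struct (ha : ∀ s t : Fin (n+1), s ≤ t → a t ≤ a s) (hineq : ∀ S : Finset (Fin (n+1)), ∑ i ∈ S, v i ≤ fw a S.card)
    (hsum : ∑ i, v i = ∑ i, a i) :
    ∃ O U : Fin (n+1) → Finset (Fin (n+1)),
      (∀ i, ∑ j ∈ O i, v j = fw a (O i).card) ∧
      (∀ i, ∑ j ∈ U i, v j = fw a (U i).card) ∧
      (∀ i, U i ⊆ O i) ∧ (∀ i, i ∈ O i) ∧ (∀ i, i ∉ U i) ∧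
      (∀ i j, j ∈ O i \ U i → O j = O i ∧ U j = U i) ∧
      (∀ S : Finset (Fin (n+1)), ∑ i ∈ S, v i = fw a S.card → ∀ i ∈ S, O i \ U i ⊆ S) ∧
      (∀ i j, O i ⊆ O j ∨ O j ⊆ O i) ∧ (∀ i j, U i ⊆ U j ∨ U j ⊆ U i) := by
  classical
  set tight : Finset (Fin (n+1)) → Prop := fun S => ∑ i ∈ S, v i = fw a S.card with htight
  have htuniv : tight univ := tight_univ hsum
  have htempty : tight (∅ : Finset (Fin (n+1))) := tight_empty
  -- maximal chain
  set P : Finset (Finset (Fin (n+1))) → Prop := fun C =>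
    (∀ A ∈ C, ∀ B ∈ C, A ⊆ B ∨ B ⊆ A) ∧ (∀ A ∈ C, tight A) ∧ ∅ ∈ C ∧ univ ∈ C with hP
  have hP0 : P {∅, univ} := by
    refine ⟨?_, ?_, by simp, by simp⟩
    · intro A hA B hB
      simp only [mem_insert, mem_singleton] at hA hB
      rcases hA with rfl | rfl <;> rcases hB with rfl | rfl <;> simp
    · intro A hA
      simp only [mem_insert, mem_singleton] at hA
      rcases hA with rfl | rfl
      · exact htempty
      · exact htuniv
  obtain ⟨𝒞, h𝒞mem, hmax⟩ :=
    Finset.exists_max_image (Finset.univ.filter P) Finset.card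
      ⟨{∅, univ}, by simp only [mem_filter]; exact ⟨mem_univ _, hP0⟩⟩
  rw [mem_filter] at h𝒞mem
  obtain ⟨-, hchain, htights, hempty𝒞, huniv𝒞⟩ := h𝒞mem
  -- insertion
  have hins : ∀ D, tight D → (∀ C ∈ 𝒞, D ⊆ C ∨ C ⊆ D) → D ∈ 𝒞 := by
    intro D hD hcomp
    by_contra hDmem
    have hP' : P (insert D 𝒞) := by
      refine ⟨?_, ?_, mem_insert_of_mem hempty𝒞, mem_insert_of_mem huniv𝒞⟩
      · intro A hA B hB
        rcases mem_insert.mp hA with hA1 | hA1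
        · rcases mem_insert.mp hB with hB1 | hB1
          · rw [hA1, hB1]; exact Or.inl Finset.Subset.rfl
          · rw [hA1]; exact hcomp B hB1
        · rcases mem_insert.mp hB with hB1 | hB1
          · rw [hB1]; exact (hcomp A hA1).symm
          · exact hchain A hA1 B hB1
      · intro A hA
        rcases mem_insert.mp hA with rfl | hA
        · exact hD
        · exact htights A hA
    have := hmax (insert D 𝒞) (by simp only [mem_filter]; exact ⟨mem_univ _, hP'⟩)
    rw [card_insert_of_notMem hDmem] at this
    omega
  -- minimal tight set containing i
  have hO : ∀ i : Fin (n+1), ∃ O, O ∈ 𝒞 ∧ i ∈ O ∧ ∀ C ∈ 𝒞, i ∈ C → O ⊆ C := by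
    intro i
    obtain ⟨O, hOmem, hOmin⟩ :=
      Finset.exists_min_image (𝒞.filter (fun C => i ∈ C)) Finset.card
        ⟨univ, by simp only [mem_filter]; exact ⟨huniv𝒞, mem_univ i⟩⟩
    rw [mem_filter] at hOmem
    refine ⟨O, hOmem.1, hOmem.2, fun C hC hiC => ?_⟩
    have hcard := hOmin C (by simp [hC, hiC])
    rcases hchain O hOmem.1 C hC with h | h
    · exact h
    · exact le_of_eq (Finset.eq_of_subset_of_card_le h hcard).symm
  have hU : ∀ i : Fin (n+1), ∃ U, U ∈ 𝒞 ∧ i ∉ U ∧ ∀ C ∈ 𝒞, i ∉ C → C ⊆ U := by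
    intro i
    obtain ⟨U, hUmem, hUmax⟩ :=
      Finset.exists_max_image (𝒞.filter (fun C => i ∉ C)) Finset.card
        ⟨∅, by simp only [mem_filter]; exact ⟨hempty𝒞, notMem_empty i⟩⟩
    rw [mem_filter] at hUmem
    refine ⟨U, hUmem.1, hUmem.2, fun C hC hiC => ?_⟩
    have hcard := hUmax C (by simp [hC, hiC])
    rcases hchain C hC U hUmem.1 with h | h
    · exact h
    · exact le_of_eq (Finset.eq_of_subset_of_card_le h hcard).symm
  choose O hOmem hOi hOmin using hO
  choose U hUmem hUi hUmax using hU
  have hUO : ∀ i, U i ⊆ O i := by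
    intro i
    rcases hchain (U i) (hUmem i) (O i) (hOmem i) with h | h
    · exact h
    · exact absurd (h (hOi i)) (hUi i)
  -- pattern lemma
  have hpat : ∀ i j, j ∈ O i \ U i → ∀ C ∈ 𝒞, (i ∈ C ↔ j ∈ C) := by
    intro i j hj C hC
    rw [mem_sdiff] at hj
    constructor
    · intro hiC
      exact hOmin i C hC hiC hj.1
    · intro hjC
      by_contra hiC
      exact hj.2 (hUmax i C hC hiC hjC)
  have hgap : ∀ i j, j ∈ O i \ U i → O j = O i ∧ U j = U i := by
    intro i j hj
    have hp := hpat i j hj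
    constructor
    · refine Finset.Subset.antisymm ?_ ?_
      · exact hOmin j (O i) (hOmem i) (Finset.mem_sdiff.mp hj).1
      · exact hOmin i (O j) (hOmem j) ((hp (O j) (hOmem j)).mpr (hOi j))
    · refine Finset.Subset.antisymm ?_ ?_
      · exact hUmax i (U j) (hUmem j) (fun h => (hUi j) ((hp (U j) (hUmem j)).mp h))
      · exact hUmax j (U i) (hUmem i) (fun h => (hUi i) ((hp (U i) (hUmem i)).mpr h))
  -- tight sets are unions of gaps
  have hgapsub : ∀ S : Finset (Fin (n+1)), tight S → ∀ i ∈ S, O i \ U i ⊆ S := by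
    intro S hS i hiS
    have hSO : tight (S ∩ O i) := (tight_uncross ha hineq hS (htights _ (hOmem i))).2
    have hD : tight ((S ∩ O i) ∪ U i) :=
      (tight_uncross ha hineq hSO (htights _ (hUmem i))).1
    have hDcomp : ∀ C ∈ 𝒞, ((S ∩ O i) ∪ U i) ⊆ C ∨ C ⊆ ((S ∩ O i) ∪ U i) := by
      intro C hC
      by_cases hiC : i ∈ C
      · left
        refine Finset.union_subset ?_ ((hUO i).trans (hOmin i C hC hiC))
        exact inter_subset_right.trans (hOmin i C hC hiC)
      · right
        exact (hUmax i C hC hiC).trans subset_union_right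
    have hDmem : ((S ∩ O i) ∪ U i) ∈ 𝒞 := hins _ hD hDcomp
    have hiD : i ∈ ((S ∩ O i) ∪ U i) := mem_union_left _ (mem_inter.mpr ⟨hiS, hOi i⟩)
    have hOD := hOmin i _ hDmem hiD
    intro j hj
    rw [mem_sdiff] at hj
    have := hOD hj.1
    rcases mem_union.mp this with h | h
    · exact (mem_inter.mp h).1
    · exact absurd h hj.2
  exact ⟨O, U, fun i => htights _ (hOmem i), fun i => htights _ (hUmem i), hUO, hOi, hUi,
    hgap, hgapsub, fun i j => hchain _ (hOmem i) _ (hOmem j),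
    fun i j => hchain _ (hUmem i) _ (hUmem j)⟩

end chain
def KH (a : Fin (n+1) → ℝ) : Set (Fin (n+1) → ℝ) :=
  {x | (∀ S : Finset (Fin (n+1)), ∑ i ∈ S, x i ≤ fw a S.card) ∧ ∑ i, x i = ∑ i, a i}


lemma convex_KH (a : Fin (n+1) → ℝ) : Convex ℝ (KH a) := by
  have h1 : ∀ S : Finset (Fin (n+1)),
      IsLinearMap ℝ (fun x : Fin (n+1) → ℝ => ∑ i ∈ S, x i) := by
    intro S
    exact ⟨fun x y => Finset.sum_add_distrib, fun c x => by simp [Finset.mul_sum]⟩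
  have : KH a = (⋂ S : Finset (Fin (n+1)), {x | ∑ i ∈ S, x i ≤ fw a S.card}) ∩
      {x | ∑ i, x i = ∑ i, a i} := by
    ext x; simp [KH, Set.mem_iInter]
  rw [this]
  exact Convex.inter (convex_iInter fun S => convex_halfSpace_le (h1 S) _)
    (convex_hyperplane (h1 univ) _)

lemma isClosed_KH (a : Fin (n+1) → ℝ) : IsClosed (KH a) := by
  have hc : ∀ S : Finset (Fin (n+1)),
      Continuous (fun x : Fin (n+1) → ℝ => ∑ i ∈ S, x i) :=
    fun S => continuous_finset_sum _ (fun i _ => continuous_apply i)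
  have : KH a = (⋂ S : Finset (Fin (n+1)), {x | ∑ i ∈ S, x i ≤ fw a S.card}) ∩
      {x | ∑ i, x i = ∑ i, a i} := by
    ext x; simp [KH, Set.mem_iInter]
  rw [this]
  exact IsClosed.inter (isClosed_iInter fun S => isClosed_le (hc S) continuous_const)
    (isClosed_eq (hc univ) continuous_const)

lemma isCompact_KH (a : Fin (n+1) → ℝ) : IsCompact (KH a) := by
  set lo : ℝ := (∑ i, a i) - fw a n with hlo
  set hi : ℝ := fw a 1 with hhi
  have hsub : KH a ⊆ Set.pi Set.univ (fun _ : Fin (n+1) => Set.Icc lo hi) := by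
    rintro x ⟨hineq, hsum⟩ i -
    constructor
    · have h := hineq (univ.erase i)
      have hcard : (univ.erase i).card = n := by
        rw [Finset.card_erase_of_mem (mem_univ i)]; simp
      rw [hcard] at h
      have : x i = (∑ j, x j) - ∑ j ∈ univ.erase i, x j := by
        rw [← Finset.add_sum_erase _ _ (mem_univ i)]; ring
      rw [this, hsum, hlo]
      linarith
    · have h := hineq {i}
      simpa using h
  exact IsCompact.of_isClosed_subset
    (isCompact_univ_pi fun _ => isCompact_Icc) (isClosed_KH a) hsub

lemma permA_subset_KH {a : Fin (n+1) → ℝ} (ha : ∀ s t : Fin (n+1), s ≤ t → a t ≤ a s) :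
    permA a ⊆ KH a := by
  apply convexHull_min _ (convex_KH a)
  rintro x ⟨σ, rfl⟩
  constructor
  · intro S
    have himg : ∑ i ∈ S, a (σ i) = ∑ j ∈ S.image σ, a j := by
      rw [Finset.sum_image (fun i _ j _ h => σ.injective h)]
    rw [himg]
    have hcard : (S.image σ).card = S.card := Finset.card_image_of_injective _ σ.injective
    rw [← hcard]
    exact sum_le_fw ha _
  · exact Equiv.sum_comp σ a

/-- perturbation lemma -/
lemma exists_eps {a y : Fin (n+1) → ℝ}
    (hineq : ∀ S : Finset (Fin (n+1)), ∑ i ∈ S, y i ≤ fw a S.card)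
    (d : Fin (n+1) → ℝ)
    (hdtight : ∀ S : Finset (Fin (n+1)), (∑ i ∈ S, y i = fw a S.card) → ∑ i ∈ S, d i = 0) :
    ∃ ε : ℝ, 0 < ε ∧ ∀ c : ℝ, |c| ≤ ε →
      ∀ S : Finset (Fin (n+1)), ∑ i ∈ S, (y i + c * d i) ≤ fw a S.card := by
  classical
  set M : ℝ := ∑ i, |d i| with hM
  have hM0 : 0 ≤ M := Finset.sum_nonneg fun i _ => abs_nonneg _
  set 𝒮 : Finset (Finset (Fin (n+1))) :=
    Finset.univ.filter (fun S => ¬ (∑ i ∈ S, y i = fw a S.card)) with h𝒮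
  set E : Finset ℝ := insert 1 (𝒮.image fun S => (fw a S.card - ∑ i ∈ S, y i) / (M + 1))
    with hE
  have hEne : E.Nonempty := ⟨1, mem_insert_self _ _⟩
  refine ⟨E.min' hEne, ?_, ?_⟩
  · rw [Finset.lt_min'_iff]
    intro r hr
    rcases mem_insert.mp hr with rfl | hr
    · norm_num
    · obtain ⟨S, hS, rfl⟩ := Finset.mem_image.mp hr
      rw [h𝒮, mem_filter] at hS
      have hlt : ∑ i ∈ S, y i < fw a S.card := lt_of_le_of_ne (hineq S) hS.2
      have hM1 : (0:ℝ) < M + 1 := by linarith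
      exact div_pos (by linarith) hM1
  · intro c hc S
    rw [Finset.sum_add_distrib]
    by_cases hS : ∑ i ∈ S, y i = fw a S.card
    · have : ∑ i ∈ S, c * d i = c * ∑ i ∈ S, d i := by rw [Finset.mul_sum]
      rw [this, hdtight S hS]
      simp [hS]
    · have hslack : E.min' hEne ≤ (fw a S.card - ∑ i ∈ S, y i) / (M + 1) := by
        apply Finset.min'_le
        rw [hE]
        refine mem_insert_of_mem (Finset.mem_image.mpr ⟨S, ?_, rfl⟩)
        rw [h𝒮, mem_filter]; exact ⟨mem_univ _, hS⟩
      have habs : |∑ i ∈ S, c * d i| ≤ |c| * M := by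
        rw [← Finset.mul_sum, abs_mul]
        refine mul_le_mul_of_nonneg_left ?_ (abs_nonneg c)
        calc |∑ i ∈ S, d i| ≤ ∑ i ∈ S, |d i| := Finset.abs_sum_le_sum_abs _ _
          _ ≤ M := Finset.sum_le_sum_of_subset_of_nonneg (subset_univ S)
              (fun i _ _ => abs_nonneg _)
      have h1 : |c| * M ≤ (fw a S.card - ∑ i ∈ S, y i) / (M + 1) * M := by
        refine mul_le_mul_of_nonneg_right (le_trans hc hslack) hM0
      have h2 : (fw a S.card - ∑ i ∈ S, y i) / (M + 1) * M ≤ fw a S.card - ∑ i ∈ S, y i := by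
        rw [div_mul_eq_mul_div, div_le_iff₀ (by linarith : (0:ℝ) < M + 1)]
        have hslack0 : 0 ≤ fw a S.card - ∑ i ∈ S, y i := by
          have := hineq S; linarith
        nlinarith
      have := le_abs_self (∑ i ∈ S, c * d i)
      linarith

/-- being extreme and perturbable both ways forces the direction to be zero -/
lemma extreme_dir_zero {s : Set (Fin (n+1) → ℝ)} {y d : Fin (n+1) → ℝ}
    (hy : y ∈ Set.extremePoints ℝ s) {ε : ℝ} (hε : 0 < ε)
    (h1 : y + ε • d ∈ s) (h2 : y - ε • d ∈ s) : d = 0 := by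
  have hseg : y ∈ openSegment ℝ (y - ε • d) (y + ε • d) := by
    refine ⟨1/2, 1/2, by norm_num, by norm_num, by norm_num, ?_⟩
    funext i
    simp only [Pi.add_apply, Pi.sub_apply, Pi.smul_apply, smul_eq_mul]
    ring
  have := hy.2 h2 h1 hseg
  have h3 : y - ε • d = y := this
  have h4 : ε • d = 0 := by
    have := sub_eq_iff_eq_add.mp h3
    funext i
    have := congrFun this i
    simp only [Pi.add_apply, Pi.smul_apply, smul_eq_mul, Pi.zero_apply] at this ⊢
    linarith
  funext i
  have := congrFun h4 i
  simp only [Pi.smul_apply, smul_eq_mul, Pi.zero_apply] at this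
  rcases mul_eq_zero.mp this with h | h
  · exact absurd h (ne_of_gt hε)
  · exact h

/-- Extreme points of the H-description polytope are permutations of `a`. -/
lemma extremePoints_KH {a : Fin (n+1) → ℝ} (ha : ∀ s t : Fin (n+1), s ≤ t → a t ≤ a s)
    {y : Fin (n+1) → ℝ} (hy : y ∈ Set.extremePoints ℝ (KH a)) :
    ∃ σ : Equiv.Perm (Fin (n+1)), y = fun i => a (σ i) := by
  classical
  obtain ⟨hineq, hsum⟩ := hy.1
  obtain ⟨O, U, hOt, hUt, hUO, hOi, hUi, hgap, hgapsub, hOcomp, hUcomp⟩ :=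
    chain_struct ha hineq hsum
  -- gaps are singletons
  have hsingle : ∀ i, O i \ U i = {i} := by
    intro i
    refine Finset.eq_singleton_iff_unique_mem.mpr ⟨?_, ?_⟩
    · exact mem_sdiff.mpr ⟨hOi i, hUi i⟩
    · intro j hj
      by_contra hne
      set d : Fin (n+1) → ℝ := (Pi.single i (1:ℝ)) - (Pi.single j 1) with hd
      have hdtight : ∀ S : Finset (Fin (n+1)), (∑ k ∈ S, y k = fw a S.card) →
          ∑ k ∈ S, d k = 0 := by
        intro S hS
        have hiff : (i ∈ S) ↔ (j ∈ S) := by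
          constructor
          · intro hiS
            exact hgapsub S hS i hiS hj
          · intro hjS
            have := hgapsub S hS j hjS
            have hin : i ∈ O j \ U j := by
              rw [(hgap i j hj).1, (hgap i j hj).2]
              exact mem_sdiff.mpr ⟨hOi i, hUi i⟩
            exact this hin
        have : ∑ k ∈ S, d k =
            (if i ∈ S then (1:ℝ) else 0) - (if j ∈ S then (1:ℝ) else 0) := by
          rw [hd]
          simp only [Pi.sub_apply, Finset.sum_sub_distrib]
          congr 1 <;> · rw [← Finset.sum_ite_eq' S _ (fun _ => (1:ℝ))]
                        exact Finset.sum_congr rfl fun k _ => by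
                          simp [Pi.single_apply, eq_comm]
        rw [this]
        by_cases hiS : i ∈ S
        · rw [if_pos hiS, if_pos (hiff.mp hiS)]; ring
        · rw [if_neg hiS, if_neg (fun h => hiS (hiff.mpr h))]; ring
      obtain ⟨ε, hε, heps⟩ := exists_eps hineq d hdtight
      have htuniv : ∑ k ∈ univ, y k = fw a (univ : Finset (Fin (n+1))).card :=
        tight_univ hsum
      have hdsum : ∑ k, d k = 0 := hdtight univ htuniv
      have hmem : ∀ c : ℝ, |c| ≤ ε → y + c • d ∈ KH a := by
        intro c hcle
        constructor
        · intro S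
          have := heps c hcle S
          simpa using this
        · have : ∑ k, (y k + c * d k) = ∑ k, y k + c * ∑ k, d k := by
            rw [Finset.sum_add_distrib, Finset.mul_sum]
          simp only [Pi.add_apply, Pi.smul_apply, smul_eq_mul]
          rw [this, hdsum, mul_zero, add_zero, hsum]
      have h1 := hmem ε (by rw [abs_of_pos hε])
      have h2 := hmem (-ε) (by rw [abs_neg, abs_of_pos hε])
      have h2' : y - ε • d ∈ KH a := by
        convert h2 using 1
        funext k; simp only [Pi.sub_apply, Pi.add_apply, Pi.smul_apply, smul_eq_mul]; ring
      have hd0 : d = 0 := extreme_dir_zero hy hε h1 h2'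
      have : d i = 1 := by
        rw [hd]; simp [Pi.single_apply, hne, Ne.symm hne]
      rw [hd0] at this
      simp at this
  -- read off the values
  have hcards : ∀ i, (O i).card = (U i).card + 1 := by
    intro i
    have h1 : (O i \ U i).card = (O i).card - (U i).card := Finset.card_sdiff_of_subset (hUO i)
    have h2 : (O i \ U i).card = 1 := by rw [hsingle i]; simp
    have h3 : (U i).card ≤ (O i).card := Finset.card_le_card (hUO i)
    omega
  have hUlt : ∀ i, (U i).card < n + 1 := by
    intro i
    have h4 : (O i).card ≤ n + 1 := by simpa using Finset.card_le_card (subset_univ (O i))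
    have := hcards i
    omega
  have hval : ∀ i, y i = a ⟨(U i).card, hUlt i⟩ := by
    intro i
    have h5 : ∑ j ∈ O i \ U i, y j = fw a (O i).card - fw a (U i).card := by
      rw [Finset.sum_sdiff_eq_sub (hUO i), hOt i, hUt i]
    rw [hsingle i, Finset.sum_singleton] at h5
    rw [h5, hcards i]
    have : fw a ((U i).card + 1) = fw a ((U i).card) + aR a ((U i).card) := by
      simp [fw, Finset.sum_range_succ]
    rw [this, aR, dif_pos (hUlt i)]
    ring
  set π : Fin (n+1) → Fin (n+1) := fun i => ⟨(U i).card, hUlt i⟩ with hπ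
  have hinj : Function.Injective π := by
    intro i j hij
    have hUcard : (U i).card = (U j).card := by
      have := congrArg Fin.val hij
      simpa [hπ] using this
    have hUeq : U i = U j := by
      rcases hUcomp i j with h | h
      · exact Finset.eq_of_subset_of_card_le h (le_of_eq hUcard.symm)
      · exact (Finset.eq_of_subset_of_card_le h (le_of_eq hUcard)).symm
    have hOcard : (O i).card = (O j).card := by rw [hcards i, hcards j, hUcard]
    have hOeq : O i = O j := by
      rcases hOcomp i j with h | h
      · exact Finset.eq_of_subset_of_card_le h (le_of_eq hOcard.symm)
      · exact (Finset.eq_of_subset_of_card_le h (le_of_eq hOcard)).symm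
    have : ({i} : Finset (Fin (n+1))) = {j} := by
      rw [← hsingle i, ← hsingle j, hUeq, hOeq]
    simpa using this
  have hbij : Function.Bijective π := (Finite.injective_iff_bijective).mp hinj
  refine ⟨Equiv.ofBijective π hbij, ?_⟩
  funext i
  rw [hval i]
  rfl

/-- The hard direction of Rado's theorem. -/
lemma KH_subset_permA {a : Fin (n+1) → ℝ} (ha : ∀ s t : Fin (n+1), s ≤ t → a t ≤ a s) :
    KH a ⊆ permA a := by
  intro x hx
  have hKM := closure_convexHull_extremePoints (isCompact_KH a) (convex_KH a)
  have hgensfin : ({x : Fin (n+1) → ℝ | ∃ σ : Equiv.Perm (Fin (n+1)),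
      x = fun i => a (σ i)}).Finite := by
    have : {x : Fin (n+1) → ℝ | ∃ σ : Equiv.Perm (Fin (n+1)), x = fun i => a (σ i)} =
        Set.range (fun σ : Equiv.Perm (Fin (n+1)) => fun i => a (σ i)) := by
      ext z; simp [Set.mem_range, eq_comm]
    rw [this]
    exact Set.finite_range _
  have hsub : Set.extremePoints ℝ (KH a) ⊆
      {x : Fin (n+1) → ℝ | ∃ σ : Equiv.Perm (Fin (n+1)), x = fun i => a (σ i)} :=
    fun y hy => extremePoints_KH ha hy
  have hclosed : IsClosed (permA a) := hgensfin.isClosed_convexHull (𝕜 := ℝ)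
  have hsub2 : closure (convexHull ℝ (Set.extremePoints ℝ (KH a))) ⊆ permA a := by
    rw [← hclosed.closure_eq]
    exact closure_mono (convexHull_mono hsub)
  exact hsub2 (by rw [hKM]; exact hx)


lemma sum_single_sub (S : Finset (Fin (n+1))) (s t : Fin (n+1)) :
    ∑ k ∈ S, (Pi.single s (1:ℝ) - Pi.single t 1 : Fin (n+1) → ℝ) k =
      (if s ∈ S then (1:ℝ) else 0) - (if t ∈ S then (1:ℝ) else 0) := by
  simp only [Pi.sub_apply, Finset.sum_sub_distrib]
  congr 1 <;> · rw [← Finset.sum_ite_eq' S _ (fun _ => (1:ℝ))]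
                exact Finset.sum_congr rfl fun k _ => by simp [Pi.single_apply, eq_comm]

section comps

variable (X : Set (Fin (n + 1) → ℝ))

/-- one step of the graph on coordinates given by `X` -/
def stp (s t : Fin (n+1)) : Prop :=
  (Pi.single s (1:ℝ) - Pi.single t 1) ∈ X ∨ (Pi.single t (1:ℝ) - Pi.single s 1) ∈ X

/-- connectivity -/
def conn : Fin (n+1) → Fin (n+1) → Prop := Relation.EqvGen (stp X)

noncomputable def comp (i : Fin (n+1)) : Finset (Fin (n+1)) :=
  @Finset.filter _ (fun j => conn X i j) (Classical.decPred _) Finset.univ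

lemma conn_equiv : Equivalence (conn X) := Relation.EqvGen.is_equivalence _

lemma mem_comp_iff {i j : Fin (n+1)} : j ∈ comp X i ↔ conn X i j := by
  constructor
  · intro h
    exact ((@Finset.mem_filter _ (fun j => conn X i j) (Classical.decPred _) _ _).mp h).2
  · intro h
    exact (@Finset.mem_filter _ (fun j => conn X i j) (Classical.decPred _) _ _).mpr
      ⟨Finset.mem_univ _, h⟩

lemma mem_comp_self (i : Fin (n+1)) : i ∈ comp X i :=
  mem_comp_iff X |>.mpr ((conn_equiv X).refl i)

lemma comp_eq_of_mem {i j : Fin (n+1)} (h : j ∈ comp X i) : comp X j = comp X i := by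
  have hij : conn X i j := (mem_comp_iff X).mp h
  ext k
  rw [mem_comp_iff, mem_comp_iff]
  constructor
  · exact fun hk => (conn_equiv X).trans hij hk
  · exact fun hk => (conn_equiv X).trans ((conn_equiv X).symm hij) hk

lemma single_sub_mem_span {s t : Fin (n+1)} (h : conn X s t) :
    (Pi.single s (1:ℝ) - Pi.single t 1) ∈ Submodule.span ℝ X := by
  induction h with
  | rel x y hxy =>
    rcases hxy with h | h
    · exact Submodule.subset_span h
    · have : (Pi.single x (1:ℝ) - Pi.single y 1 : Fin (n+1) → ℝ)
          = -(Pi.single y (1:ℝ) - Pi.single x 1) := by abel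
      rw [this]
      exact neg_mem (Submodule.subset_span h)
  | refl x => simp
  | symm x y _ ih =>
    have : (Pi.single y (1:ℝ) - Pi.single x 1 : Fin (n+1) → ℝ)
        = -(Pi.single x (1:ℝ) - Pi.single y 1) := by abel
    rw [this]
    exact neg_mem ih
  | trans x y z _ _ ih1 ih2 =>
    have : (Pi.single x (1:ℝ) - Pi.single z 1 : Fin (n+1) → ℝ) =
        (Pi.single x (1:ℝ) - Pi.single y 1) + (Pi.single y (1:ℝ) - Pi.single z 1) := by abel
    rw [this]
    exact add_mem ih1 ih2

lemma span_comp_sum_zero (hX : ∀ x ∈ X, ∃ s t : Fin (n + 1), s < t ∧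
      x = Pi.single s (1 : ℝ) - Pi.single t 1)
    {w : Fin (n+1) → ℝ} (hw : w ∈ Submodule.span ℝ X) (i : Fin (n+1)) :
    ∑ j ∈ comp X i, w j = 0 := by
  classical
  set φ : (Fin (n+1) → ℝ) →ₗ[ℝ] ℝ :=
    { toFun := fun w => ∑ j ∈ comp X i, w j
      map_add' := fun x y => by simp [Finset.sum_add_distrib]
      map_smul' := fun c x => by simp [Finset.mul_sum] } with hφ
  have hker : X ⊆ (LinearMap.ker φ : Set (Fin (n+1) → ℝ)) := by
    intro x hx
    obtain ⟨s, t, _, rfl⟩ := hX x hx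
    have hst : conn X s t := Relation.EqvGen.rel _ _ (Or.inl hx)
    have hiff : s ∈ comp X i ↔ t ∈ comp X i := by
      rw [mem_comp_iff, mem_comp_iff]
      constructor
      · exact fun h => (conn_equiv X).trans h hst
      · exact fun h => (conn_equiv X).trans h ((conn_equiv X).symm hst)
    simp only [SetLike.mem_coe, LinearMap.mem_ker, hφ, LinearMap.coe_mk, AddHom.coe_mk]
    rw [sum_single_sub]
    by_cases h : s ∈ comp X i
    · rw [if_pos h, if_pos (hiff.mp h)]; ring
    · rw [if_neg h, if_neg (fun hh => h (hiff.mpr hh))]; ring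
  have : Submodule.span ℝ X ≤ LinearMap.ker φ := Submodule.span_le.mpr hker
  exact this hw

/-- the flow lemma: zero component sums means membership in the span -/
lemma mem_span_of_comp_sums_zero
    {d : Fin (n+1) → ℝ} (hd : ∀ i, ∑ j ∈ comp X i, d j = 0) :
    d ∈ Submodule.span ℝ X := by
  classical
  suffices H : ∀ N : ℕ, ∀ d : Fin (n+1) → ℝ,
      (Finset.univ.filter (fun i => d i ≠ 0)).card ≤ N →
      (∀ i, ∑ j ∈ comp X i, d j = 0) → d ∈ Submodule.span ℝ X by
    exact H _ d le_rfl hd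
  intro N
  induction N with
  | zero =>
    intro d hcard _
    have : d = 0 := by
      funext i
      simp only [Pi.zero_apply]
      by_contra hi
      have hmem : i ∈ Finset.univ.filter (fun k => d k ≠ 0) := by
        simp [hi]
      have := Finset.card_pos.mpr ⟨i, hmem⟩
      omega
    rw [this]
    exact zero_mem _
  | succ N ih =>
    intro d hcard hsums
    by_cases h0 : (Finset.univ.filter (fun i => d i ≠ 0)) = ∅
    · have : d = 0 := by
        funext i
        simp only [Pi.zero_apply]
        by_contra hi
        have hmem : i ∈ Finset.univ.filter (fun k => d k ≠ 0) := by simp [hi]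
        rw [h0] at hmem
        exact absurd hmem (Finset.notMem_empty i)
      rw [this]; exact zero_mem _
    · obtain ⟨i, hi⟩ := Finset.nonempty_of_ne_empty h0
      rw [mem_filter] at hi
      have hdi : d i ≠ 0 := hi.2
      have hsum_erase : ∑ j ∈ (comp X i).erase i, d j = -(d i) := by
        have := hsums i
        rw [← Finset.add_sum_erase _ _ (mem_comp_self X i)] at this
        linarith
      have hne : ∑ j ∈ (comp X i).erase i, d j ≠ 0 := by
        rw [hsum_erase]; exact neg_ne_zero.mpr hdi
      obtain ⟨j, hj, hdj⟩ := Finset.exists_ne_zero_of_sum_ne_zero hne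
      have hjc : j ∈ comp X i := Finset.mem_of_mem_erase hj
      have hji : j ≠ i := Finset.ne_of_mem_erase hj
      set e : Fin (n+1) → ℝ := Pi.single j (1:ℝ) - Pi.single i 1 with he
      set d' : Fin (n+1) → ℝ := d - (d j) • e with hd'
      have hconn : conn X i j := (mem_comp_iff X).mp hjc
      have he_span : e ∈ Submodule.span ℝ X :=
        single_sub_mem_span X ((conn_equiv X).symm hconn)
      have hd'j : d' j = 0 := by
        simp [hd', he, Pi.single_apply, hji]
      have hd'k : ∀ k, k ≠ j → k ≠ i → d' k = d k := by
        intro k hkj hki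
        simp [hd', he, Pi.single_apply, Ne.symm hkj, Ne.symm hki]
      have hsupp : (Finset.univ.filter (fun k => d' k ≠ 0)) ⊆
          (Finset.univ.filter (fun k => d k ≠ 0)).erase j := by
        intro k hk
        rw [mem_filter] at hk
        rw [Finset.mem_erase, mem_filter]
        have hkj : k ≠ j := by
          intro hkj; rw [hkj] at hk; exact hk.2 hd'j
        refine ⟨hkj, mem_univ k, ?_⟩
        by_cases hki : k = i
        · rw [hki]; exact hdi
        · rw [← hd'k k hkj hki]; exact hk.2
      have hcard' : (Finset.univ.filter (fun k => d' k ≠ 0)).card ≤ N := by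
        have h1 := Finset.card_le_card hsupp
        have hjmem : j ∈ Finset.univ.filter (fun k => d k ≠ 0) := by simp [hdj]
        have h2 := Finset.card_erase_of_mem hjmem
        omega
      have hsums' : ∀ k, ∑ l ∈ comp X k, d' l = 0 := by
        intro k
        have hesum : ∑ l ∈ comp X k, e l = 0 := by
          rw [he, sum_single_sub]
          have hiff : j ∈ comp X k ↔ i ∈ comp X k := by
            rw [mem_comp_iff, mem_comp_iff]
            constructor
            · exact fun h => (conn_equiv X).trans h ((conn_equiv X).symm hconn)
            · exact fun h => (conn_equiv X).trans h hconn
          by_cases h : j ∈ comp X k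
          · rw [if_pos h, if_pos (hiff.mp h)]; ring
          · rw [if_neg h, if_neg (fun hh => h (hiff.mpr hh))]; ring
        have : ∑ l ∈ comp X k, d' l =
            ∑ l ∈ comp X k, d l - d j * ∑ l ∈ comp X k, e l := by
          rw [Finset.mul_sum, ← Finset.sum_sub_distrib]
          exact Finset.sum_congr rfl fun l _ => by simp [hd']
        rw [this, hsums k, hesum]
        ring
      have hd'span := ih d' hcard' hsums'
      have : d = d' + (d j) • e := by rw [hd']; ring
      rw [this]
      exact add_mem hd'span (Submodule.smul_mem _ _ he_span)

end comps

/-- sums over unions of blocks vanish -/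
lemma sum_eq_zero_of_blocks {g : Fin (n+1) → Finset (Fin (n+1))}
    (hg1 : ∀ i, i ∈ g i) (hg2 : ∀ i j, j ∈ g i → g j = g i)
    {d : Fin (n+1) → ℝ} (hd : ∀ i, ∑ j ∈ g i, d j = 0)
    {S : Finset (Fin (n+1))} (hS : ∀ i ∈ S, g i ⊆ S) : ∑ i ∈ S, d i = 0 := by
  classical
  have key : ∑ i ∈ S, ∑ j ∈ g i, ((g i).card : ℝ)⁻¹ * d j =
      ∑ j ∈ S, ∑ i ∈ g j, ((g i).card : ℝ)⁻¹ * d j := by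
    refine Finset.sum_comm' ?_
    intro x y
    constructor
    · rintro ⟨hxS, hyx⟩
      exact ⟨(hg2 x y hyx).symm ▸ hg1 x, hS x hxS hyx⟩
    · rintro ⟨hxy, hyS⟩
      have := hg2 y x hxy
      exact ⟨hS y hyS hxy, this ▸ hg1 y⟩
  have hL : ∑ i ∈ S, ∑ j ∈ g i, ((g i).card : ℝ)⁻¹ * d j = 0 := by
    refine Finset.sum_eq_zero fun i _ => ?_
    rw [← Finset.mul_sum, hd i, mul_zero]
  have hR : ∑ j ∈ S, ∑ i ∈ g j, ((g i).card : ℝ)⁻¹ * d j = ∑ j ∈ S, d j := by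
    refine Finset.sum_congr rfl fun j _ => ?_
    have hcongr : ∀ i ∈ g j, ((g i).card : ℝ)⁻¹ * d j = ((g j).card : ℝ)⁻¹ * d j := by
      intro i hi
      rw [hg2 j i hi]
    rw [Finset.sum_congr rfl hcongr, Finset.sum_const, nsmul_eq_mul]
    have hpos : 0 < (g j).card := Finset.card_pos.mpr ⟨j, hg1 j⟩
    field_simp
  rw [hL] at key
  rw [← hR, ← key]


/-- Given two "partition-like" block functions each of whose blocks meets `F` in at least
two points (when it meets it at all), there is a nonzero vector supported on `F` with
zero sum over every block. -/
lemma exists_kernel_vector {F : Finset (Fin (n+1))} (hF : F.Nonempty)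
    (g c : Fin (n+1) → Finset (Fin (n+1)))
    (hg1 : ∀ i, i ∈ g i) (hg2 : ∀ i j, j ∈ g i → g j = g i)
    (hc1 : ∀ i, i ∈ c i) (hc2 : ∀ i j, j ∈ c i → c j = c i)
    (hgF : ∀ i ∈ F, ∃ j ∈ F, j ≠ i ∧ j ∈ g i)
    (hcF : ∀ i ∈ F, ∃ j ∈ F, j ≠ i ∧ j ∈ c i) :
    ∃ d : Fin (n+1) → ℝ, d ≠ 0 ∧ (∀ i ∉ F, d i = 0) ∧
      (∀ i, ∑ j ∈ g i, d j = 0) ∧ (∀ i, ∑ j ∈ c i, d j = 0) := by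
  classical
  set R1 : Finset (Finset (Fin (n+1))) := F.image g with hR1
  set R2 : Finset (Finset (Fin (n+1))) := F.image c with hR2
  obtain ⟨i0, hi0⟩ := hF
  set B0 : Finset (Fin (n+1)) := g i0 with hB0
  have hB0R1 : B0 ∈ R1 := Finset.mem_image_of_mem g hi0
  -- counting : 2 * #blocks ≤ #F
  have hcount : ∀ (b : Fin (n+1) → Finset (Fin (n+1))),
      (∀ i, i ∈ b i) → (∀ i j, j ∈ b i → b j = b i) →
      (∀ i ∈ F, ∃ j ∈ F, j ≠ i ∧ j ∈ b i) →
      2 * (F.image b).card ≤ F.card := by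
    intro b hb1 hb2 hbF
    have hdisj : ∀ B ∈ F.image b, ∀ B' ∈ F.image b, B ≠ B' →
        Disjoint (B ∩ F) (B' ∩ F) := by
      intro B hB B' hB' hne
      obtain ⟨i, _, rfl⟩ := Finset.mem_image.mp hB
      obtain ⟨i', _, rfl⟩ := Finset.mem_image.mp hB'
      rw [Finset.disjoint_left]
      intro k hk hk'
      rw [Finset.mem_inter] at hk hk'
      exact hne ((hb2 i k hk.1).symm.trans (hb2 i' k hk'.1))
    have hcover : F = (F.image b).biUnion (fun B => B ∩ F) := by
      apply Finset.Subset.antisymm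
      · intro i hi
        rw [Finset.mem_biUnion]
        exact ⟨b i, Finset.mem_image_of_mem b hi, Finset.mem_inter.mpr ⟨hb1 i, hi⟩⟩
      · intro i hi
        rw [Finset.mem_biUnion] at hi
        obtain ⟨B, _, hB⟩ := hi
        exact (Finset.mem_inter.mp hB).2
    have hcard : F.card = ∑ B ∈ F.image b, (B ∩ F).card := by
      conv_lhs => rw [hcover]
      rw [Finset.card_biUnion hdisj]
    have hge2 : ∀ B ∈ F.image b, 2 ≤ (B ∩ F).card := by
      intro B hB
      obtain ⟨i, hiF, rfl⟩ := Finset.mem_image.mp hB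
      obtain ⟨j, hjF, hji, hjb⟩ := hbF i hiF
      refine Finset.one_lt_card.mpr ⟨i, Finset.mem_inter.mpr ⟨hb1 i, hiF⟩,
        j, Finset.mem_inter.mpr ⟨hjb, hjF⟩, fun h => hji h.symm⟩
    calc 2 * (F.image b).card = ∑ _B ∈ F.image b, 2 := by
          rw [Finset.sum_const, smul_eq_mul, mul_comm]
      _ ≤ ∑ B ∈ F.image b, (B ∩ F).card := Finset.sum_le_sum hge2
      _ = F.card := hcard.symm
  have hcount1 := hcount g hg1 hg2 hgF
  have hcount2 := hcount c hc1 hc2 hcF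
  -- the linear map
  set extL : (↥F → ℝ) →ₗ[ℝ] (Fin (n+1) → ℝ) :=
    { toFun := fun e i => if h : i ∈ F then e ⟨i, h⟩ else 0
      map_add' := fun x y => by funext i; by_cases h : i ∈ F <;> simp [h]
      map_smul' := fun m x => by funext i; by_cases h : i ∈ F <;> simp [h] } with hextL
  set ext : (↥F → ℝ) → (Fin (n+1) → ℝ) := fun e => extL e with hext
  have hext_apply : ∀ e i, ext e i = if h : i ∈ F then e ⟨i, h⟩ else 0 := fun e i => rfl
  set sumL : Finset (Fin (n+1)) → ((Fin (n+1) → ℝ) →ₗ[ℝ] ℝ) := fun B =>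
    { toFun := fun w => ∑ j ∈ B, w j
      map_add' := fun x y => by simp [Finset.sum_add_distrib]
      map_smul' := fun m x => by simp [Finset.mul_sum] } with hsumL
  set T : (↥F → ℝ) →ₗ[ℝ] (↥(R1.erase B0) → ℝ) × (↥R2 → ℝ) :=
    LinearMap.prod
      (LinearMap.pi (fun B : ↥(R1.erase B0) => (sumL ((B : Finset (Fin (n+1))) ∩ F)).comp extL))
      (LinearMap.pi (fun B : ↥R2 => (sumL ((B : Finset (Fin (n+1))) ∩ F)).comp extL)) with hT
  have hnotinj : ¬ Function.Injective T := by
    intro hinj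
    have h1 : Module.finrank ℝ (↥F → ℝ) ≤
        Module.finrank ℝ ((↥(R1.erase B0) → ℝ) × (↥R2 → ℝ)) :=
      LinearMap.finrank_le_finrank_of_injective hinj
    rw [Module.finrank_fintype_fun_eq_card, Fintype.card_coe] at h1
    rw [Module.finrank_prod, Module.finrank_fintype_fun_eq_card,
      Module.finrank_fintype_fun_eq_card, Fintype.card_coe, Fintype.card_coe] at h1
    have hR1card : (R1.erase B0).card = R1.card - 1 := Finset.card_erase_of_mem hB0R1
    have hR1pos : 0 < R1.card := Finset.card_pos.mpr ⟨B0, hB0R1⟩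
    have hFcard : 0 < F.card := Finset.card_pos.mpr ⟨i0, hi0⟩
    rw [← hR1] at hcount1
    rw [← hR2] at hcount2
    omega
  rw [Function.not_injective_iff] at hnotinj
  obtain ⟨e1, e2, hTe, hee⟩ := hnotinj
  set e : ↥F → ℝ := e1 - e2 with he
  have hTe0 : T e = 0 := by rw [he, map_sub, hTe, sub_self]
  have hene : e ≠ 0 := fun h => hee (by rwa [he, sub_eq_zero] at h)
  set d : Fin (n+1) → ℝ := ext e with hd
  -- sums over blocks via d
  have hsum_block : ∀ B : Finset (Fin (n+1)), ∑ j ∈ B, d j = ∑ j ∈ B ∩ F, ext e j := by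
    intro B
    rw [hd]
    rw [← Finset.sum_subset (Finset.inter_subset_left : B ∩ F ⊆ B)]
    intro x hxB hxF
    rw [Finset.mem_inter, not_and] at hxF
    rw [hext_apply]
    exact dif_neg (hxF hxB)
  have hT1 : ∀ B (hB : B ∈ R1.erase B0), ∑ j ∈ B ∩ F, ext e j = 0 := by
    intro B hB
    have := congrFun (congrArg Prod.fst hTe0) ⟨B, hB⟩
    simpa [hT, hext, LinearMap.pi_apply, hsumL] using this
  have hT2 : ∀ B (hB : B ∈ R2), ∑ j ∈ B ∩ F, ext e j = 0 := by
    intro B hB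
    have := congrFun (congrArg Prod.snd hTe0) ⟨B, hB⟩
    simpa [hT, hext, LinearMap.pi_apply, hsumL] using this
  -- total sum over F is zero, via R2
  have hdisj2 : ∀ B ∈ R2, ∀ B' ∈ R2, B ≠ B' → Disjoint (B ∩ F) (B' ∩ F) := by
    intro B hB B' hB' hne
    obtain ⟨i, _, rfl⟩ := Finset.mem_image.mp hB
    obtain ⟨i', _, rfl⟩ := Finset.mem_image.mp hB'
    rw [Finset.disjoint_left]
    intro k hk hk'
    rw [Finset.mem_inter] at hk hk'
    exact hne ((hc2 i k hk.1).symm.trans (hc2 i' k hk'.1))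
  have hcover2 : F = R2.biUnion (fun B => B ∩ F) := by
    apply Finset.Subset.antisymm
    · intro i hi
      rw [Finset.mem_biUnion]
      exact ⟨c i, Finset.mem_image_of_mem c hi, Finset.mem_inter.mpr ⟨hc1 i, hi⟩⟩
    · intro i hi
      rw [Finset.mem_biUnion] at hi
      obtain ⟨B, _, hB⟩ := hi
      exact (Finset.mem_inter.mp hB).2
  have htotal : ∑ j ∈ F, ext e j = 0 := by
    rw [hcover2, Finset.sum_biUnion hdisj2]
    exact Finset.sum_eq_zero fun B hB => hT2 B hB
  -- B0 sum is zero via R1 cover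
  have hdisj1 : ∀ B ∈ R1, ∀ B' ∈ R1, B ≠ B' → Disjoint (B ∩ F) (B' ∩ F) := by
    intro B hB B' hB' hne
    obtain ⟨i, _, rfl⟩ := Finset.mem_image.mp hB
    obtain ⟨i', _, rfl⟩ := Finset.mem_image.mp hB'
    rw [Finset.disjoint_left]
    intro k hk hk'
    rw [Finset.mem_inter] at hk hk'
    exact hne ((hg2 i k hk.1).symm.trans (hg2 i' k hk'.1))
  have hcover1 : F = R1.biUnion (fun B => B ∩ F) := by
    apply Finset.Subset.antisymm
    · intro i hi
      rw [Finset.mem_biUnion]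
      exact ⟨g i, Finset.mem_image_of_mem g hi, Finset.mem_inter.mpr ⟨hg1 i, hi⟩⟩
    · intro i hi
      rw [Finset.mem_biUnion] at hi
      obtain ⟨B, _, hB⟩ := hi
      exact (Finset.mem_inter.mp hB).2
  have hB0sum : ∑ j ∈ B0 ∩ F, ext e j = 0 := by
    have h1 : ∑ B ∈ R1, ∑ j ∈ B ∩ F, ext e j = 0 := by
      rw [← Finset.sum_biUnion hdisj1, ← hcover1]
      exact htotal
    rw [← Finset.add_sum_erase _ _ hB0R1] at h1
    have h2 : ∑ B ∈ R1.erase B0, ∑ j ∈ B ∩ F, ext e j = 0 :=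
      Finset.sum_eq_zero fun B hB => hT1 B hB
    rw [h2] at h1
    linarith
  have hR1sum : ∀ B ∈ R1, ∑ j ∈ B ∩ F, ext e j = 0 := by
    intro B hB
    by_cases h : B = B0
    · rw [h]; exact hB0sum
    · exact hT1 B (Finset.mem_erase.mpr ⟨h, hB⟩)
  -- conclude
  refine ⟨d, ?_, ?_, ?_, ?_⟩
  · intro h
    apply hene
    funext k
    have := congrFun h k
    rw [hd, hext_apply] at this
    simp only [Pi.zero_apply] at this ⊢
    rw [dif_pos k.2] at this
    simpa using this
  · intro i hi
    rw [hd, hext_apply]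
    exact dif_neg hi
  · intro i
    rw [hsum_block]
    by_cases h : (g i ∩ F).Nonempty
    · obtain ⟨k, hk⟩ := h
      rw [Finset.mem_inter] at hk
      have : g k = g i := hg2 i k hk.1
      have hmem : g i ∈ R1 := by
        rw [← this]
        exact Finset.mem_image_of_mem g hk.2
      exact hR1sum _ hmem
    · rw [Finset.not_nonempty_iff_eq_empty] at h
      rw [h, Finset.sum_empty]
  · intro i
    rw [hsum_block]
    by_cases h : (c i ∩ F).Nonempty
    · obtain ⟨k, hk⟩ := h
      rw [Finset.mem_inter] at hk
      have : c k = c i := hc2 i k hk.1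
      have hmem : c i ∈ R2 := by
        rw [← this]
        exact Finset.mem_image_of_mem c hk.2
      exact hT2 _ hmem
    · rw [Finset.not_nonempty_iff_eq_empty] at h
      rw [h, Finset.sum_empty]

/-- real numbers that are integers -/
def IsInt (r : ℝ) : Prop := ∃ z : ℤ, r = (z : ℝ)

lemma isInt_sum {α : Type*} {S : Finset α} {f : α → ℝ} (h : ∀ i ∈ S, IsInt (f i)) :
    IsInt (∑ i ∈ S, f i) := by
  classical
  induction S using Finset.induction with
  | empty => exact ⟨0, by simp⟩
  | @insert a S ha ih =>
    obtain ⟨z, hz⟩ := h a (Finset.mem_insert_self a S)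
    obtain ⟨w, hw⟩ := ih (fun i hi => h i (Finset.mem_insert_of_mem hi))
    exact ⟨z + w, by rw [Finset.sum_insert ha, hz, hw]; push_cast; ring⟩

lemma isInt_sub {r s : ℝ} (hr : IsInt r) (hs : IsInt s) : IsInt (r - s) := by
  obtain ⟨z, rfl⟩ := hr
  obtain ⟨w, rfl⟩ := hs
  exact ⟨z - w, by push_cast; ring⟩

lemma isInt_fw (a : Fin (n+1) → ℤ) (k : ℕ) : IsInt (fw (fun t => (a t : ℝ)) k) := by
  apply isInt_sum
  intro i _
  rw [aR]
  by_cases h : i < n + 1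
  · rw [dif_pos h]; exact ⟨a ⟨i, h⟩, rfl⟩
  · rw [dif_neg h]; exact ⟨0, by simp⟩

lemma frac_pair {B : Finset (Fin (n+1))} {v : Fin (n+1) → ℝ}
    (hB : IsInt (∑ j ∈ B, v j)) {i : Fin (n+1)} (hi : i ∈ B) (hvi : ¬ IsInt (v i)) :
    ∃ j ∈ B, j ≠ i ∧ ¬ IsInt (v j) := by
  by_contra h
  push_neg at h
  have h2 : IsInt (∑ j ∈ B.erase i, v j) :=
    isInt_sum (fun j hj => h j (Finset.mem_of_mem_erase hj) (Finset.ne_of_mem_erase hj))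
  have h3 : v i = (∑ j ∈ B, v j) - ∑ j ∈ B.erase i, v j := by
    rw [← Finset.add_sum_erase _ _ hi]; ring
  exact hvi (h3 ▸ isInt_sub hB h2)

end Aux

/-- slices of permutohedra in Type A have lattice vertices:
in the root system `A_n`, realized in `ℝ^{n+1}` with roots `e_s − e_t`, weight
lattice `ℤ^{n+1}` and root lattice `Q = {integer vectors with coordinate sum 0}`,
for a dominant weight `λ = a` (a decreasing integer vector), a weight
`μ ∈ Q + λ` (an integer vector with the same coordinate sum as `a`), and a set
`X ⊆ Φ^+` of positive roots, every vertex (extreme point) of the slice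
`(μ + Span_ℝ(X)) ∩ Π(λ)` lies in `Q + λ`. -/
theorem typeA_slices_have_lattice_vertices (n : ℕ) (a : Fin (n + 1) → ℤ)
    (ha : ∀ s t : Fin (n + 1), s ≤ t → a t ≤ a s)
    (μ : Fin (n + 1) → ℝ)
    (hμint : ∀ t, ∃ z : ℤ, μ t = (z : ℝ)) (hμsum : ∑ t, μ t = ∑ t, (a t : ℝ))
    (X : Set (Fin (n + 1) → ℝ))
    (hX : ∀ x ∈ X, ∃ s t : Fin (n + 1), s < t ∧
      x = Pi.single s (1 : ℝ) - Pi.single t 1)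
    (v : Fin (n + 1) → ℝ)
    (hv : v ∈ Set.extremePoints ℝ
      ({y | ∃ s ∈ Submodule.span ℝ X, y = μ + s} ∩ permA (fun t => (a t : ℝ)))) :
    (∀ t, ∃ z : ℤ, v t = (z : ℝ)) ∧ ∑ t, v t = ∑ t, (a t : ℝ) := by
  classical
  set b : Fin (n+1) → ℝ := fun t => (a t : ℝ) with hb
  have hbmono : ∀ s t : Fin (n + 1), s ≤ t → b t ≤ b s :=
    fun s t h => Int.cast_le.mpr (ha s t h)
  obtain ⟨⟨s, hs, hvs⟩, hvperm⟩ := hv.1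
  obtain ⟨hineq, hsum⟩ := permA_subset_KH hbmono hvperm
  refine ⟨?_, hsum⟩
  by_contra hnot
  push_neg at hnot
  obtain ⟨t0, ht0⟩ := hnot
  set F : Finset (Fin (n+1)) := Finset.univ.filter (fun i => ¬ IsInt (v i)) with hF
  have hFne : F.Nonempty := ⟨t0, by simp [hF, IsInt]; intro z; exact fun h => (ht0 z h).elim⟩
  obtain ⟨O, U, hOt, hUt, hUO, hOi, hUi, hgap, hgapsub, hOcomp, hUcomp⟩ :=
    chain_struct hbmono hineq hsum
  set g : Fin (n+1) → Finset (Fin (n+1)) := fun i => O i \ U i with hg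
  have hg1 : ∀ i, i ∈ g i := fun i => Finset.mem_sdiff.mpr ⟨hOi i, hUi i⟩
  have hg2 : ∀ i j, j ∈ g i → g j = g i := by
    intro i j hj
    obtain ⟨h1, h2⟩ := hgap i j hj
    rw [hg]
    simp only
    rw [h1, h2]
  have hgInt : ∀ i, IsInt (∑ j ∈ g i, v j) := by
    intro i
    have : ∑ j ∈ g i, v j = fw b (O i).card - fw b (U i).card := by
      rw [hg]
      simp only
      rw [Finset.sum_sdiff_eq_sub (hUO i), hOt i, hUt i]
    rw [this, hb]
    exact isInt_sub (isInt_fw a _) (isInt_fw a _)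
  set c : Fin (n+1) → Finset (Fin (n+1)) := fun i => comp X i with hc
  have hc1 : ∀ i, i ∈ c i := fun i => mem_comp_self X i
  have hc2 : ∀ i j, j ∈ c i → c j = c i := fun i j hj => comp_eq_of_mem X hj
  have hvμ : v - μ ∈ Submodule.span ℝ X := by
    have : v - μ = s := by rw [hvs]; funext k; simp
    rw [this]; exact hs
  have hcInt : ∀ i, IsInt (∑ j ∈ c i, v j) := by
    intro i
    have h0 : ∑ j ∈ c i, (v - μ) j = 0 := span_comp_sum_zero X hX hvμ i
    have h1 : ∑ j ∈ c i, v j = ∑ j ∈ c i, μ j := by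
      have : ∑ j ∈ c i, (v j - μ j) = 0 := by
        rw [← h0]; exact Finset.sum_congr rfl fun j _ => rfl
      rw [Finset.sum_sub_distrib] at this
      linarith
    rw [h1]
    exact isInt_sum fun j _ => hμint j
  have hFmem : ∀ i, i ∈ F ↔ ¬ IsInt (v i) := by
    intro i; rw [hF, Finset.mem_filter]; simp
  have hgF : ∀ i ∈ F, ∃ j ∈ F, j ≠ i ∧ j ∈ g i := by
    intro i hi
    obtain ⟨j, hj, hji, hjint⟩ := frac_pair (hgInt i) (hg1 i) ((hFmem i).mp hi)
    exact ⟨j, (hFmem j).mpr hjint, hji, hj⟩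
  have hcF : ∀ i ∈ F, ∃ j ∈ F, j ≠ i ∧ j ∈ c i := by
    intro i hi
    obtain ⟨j, hj, hji, hjint⟩ := frac_pair (hcInt i) (hc1 i) ((hFmem i).mp hi)
    exact ⟨j, (hFmem j).mpr hjint, hji, hj⟩
  obtain ⟨d, hdne, hdsupp, hdg, hdc⟩ :=
    exists_kernel_vector hFne g c hg1 hg2 hc1 hc2 hgF hcF
  have hdtight : ∀ S : Finset (Fin (n+1)), (∑ i ∈ S, v i = fw b S.card) →
      ∑ i ∈ S, d i = 0 := by
    intro S hS
    exact sum_eq_zero_of_blocks hg1 hg2 hdg (hgapsub S hS)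
  have hdspan : d ∈ Submodule.span ℝ X := mem_span_of_comp_sums_zero X hdc
  obtain ⟨ε, hε, heps⟩ := exists_eps hineq d hdtight
  have htuniv : ∑ k ∈ Finset.univ, v k = fw b (Finset.univ : Finset (Fin (n+1))).card :=
    tight_univ hsum
  have hdsum0 : ∑ k, d k = 0 := hdtight Finset.univ htuniv
  have hmem : ∀ cc : ℝ, |cc| ≤ ε → v + cc • d ∈
      ({y | ∃ s ∈ Submodule.span ℝ X, y = μ + s} ∩ permA b) := by
    intro cc hcc
    constructor
    · refine ⟨s + cc • d, Submodule.add_mem _ hs (Submodule.smul_mem _ _ hdspan), ?_⟩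
      rw [hvs, add_assoc]
    · apply KH_subset_permA hbmono
      constructor
      · intro S
        have := heps cc hcc S
        calc ∑ i ∈ S, (v + cc • d) i = ∑ i ∈ S, (v i + cc * d i) := by
              exact Finset.sum_congr rfl fun i _ => by simp
          _ ≤ fw b S.card := this
      · have h1 : ∑ i, (v + cc • d) i = ∑ i, v i + cc * ∑ i, d i := by
          rw [Finset.mul_sum, ← Finset.sum_add_distrib]
          exact Finset.sum_congr rfl fun i _ => by simp
        rw [h1, hdsum0, mul_zero, add_zero, hsum]
  have h1 := hmem ε (by rw [abs_of_pos hε])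
  have h2 := hmem (-ε) (by rw [abs_neg, abs_of_pos hε])
  have h2' : v - ε • d ∈ ({y | ∃ s ∈ Submodule.span ℝ X, y = μ + s} ∩ permA b) := by
    have : v - ε • d = v + (-ε) • d := by
      funext k; simp; ring
    rw [this]; exact h2
  exact hdne (extreme_dir_zero hv hε h1 h2')
end
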